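/- arXiv:1512.05703 — 2 statements merged into one kernel-verified Lean document; each statement's English description precedes it below -/
import Mathlib

section
/- Let T1 and T2 be two rooted (nonbinary) phylogenetic 𝒳-trees. Every agreement forest reported by applying allMulMAFs to T1 and T2 is relevant, i.e., it contains no edge e such that contracting e still yields an agreement forest for T1 and T2. -/
open scoped Classical

namespace Phylo

/-! ## Rooted multifurcating phylogenetic trees, encoded as laminar families of clusters.

A rooted (possibly multi-labeled) tree is identified with the family of clusters
(= sets of taxa below a node) of its nodes.  Leaves are the minimal clusters
("blocks"); in an ordinary phylogenetic tree all blocks are singletons, while the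
trees manipulated by the algorithm may carry set labels (contracted cherries). -/

variable {β : Type} [DecidableEq β]

/-- A cluster system: candidate representation of a rooted tree. -/
abbrev Clus (β : Type) := Finset (Finset β)

/-- Ground set (taxa set / label set `ℒ`) of a cluster system. -/
def grd (G : Clus β) : Finset β := G.sup id

/-- `A` is a block (leaf label) of `G`: a minimal cluster. -/
def IsBlock (G : Clus β) (A : Finset β) : Prop :=
  A ∈ G ∧ ∀ C ∈ G, C ⊆ A → C = A

/-- `G` is (the cluster system of) a rooted tree: a laminar family of nonempty
sets containing its ground set, in which every element lies in some block. -/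
def IsTree (G : Clus β) : Prop :=
  G.Nonempty ∧ (∀ C ∈ G, C.Nonempty) ∧
  (∀ C ∈ G, ∀ D ∈ G, C ⊆ D ∨ D ⊆ C ∨ Disjoint C D) ∧
  grd G ∈ G ∧
  (∀ x ∈ grd G, ∃ A, IsBlock G A ∧ x ∈ A)

/-- `D` is a child of `C` in `G` (a maximal proper subcluster). -/
def IsChild (G : Clus β) (D C : Finset β) : Prop :=
  D ∈ G ∧ C ∈ G ∧ D ⊂ C ∧ ∀ E ∈ G, D ⊆ E → E ⊂ C → E = D

/-- `C` is the cluster of the lowest common ancestor of `A` in `G`. -/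
def IsLca (G : Clus β) (A C : Finset β) : Prop :=
  C ∈ G ∧ A ⊆ C ∧ ∀ D ∈ G, A ⊆ D → C ⊆ D

/-- Every internal node has exactly two children. -/
def IsBin (G : Clus β) : Prop :=
  ∀ C ∈ G, ¬ IsBlock G C →
    ∃ D E, D ≠ E ∧ IsChild G D C ∧ IsChild G E C ∧
      ∀ D', IsChild G D' C → D' = D ∨ D' = E

/-- `G` is a rooted phylogenetic tree on taxa set `X` (all leaves are singletons,
bijectively labeled by `X`). -/
def IsPhylo (X : Finset β) (G : Clus β) : Prop :=
  IsTree G ∧ grd G = X ∧ ∀ x ∈ X, ({x} : Finset β) ∈ G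

/-- `G'` is a refinement of `G`: `G` is obtained from `G'` by contracting edges
(removing internal clusters); leaves are untouched. -/
def Refines (G' G : Clus β) : Prop :=
  G ⊆ G' ∧ ∀ A, IsBlock G' A ↔ IsBlock G A

/-- binary resolution of a tree. -/
def BinRes (G' G : Clus β) : Prop := Refines G' G ∧ IsBin G'

/-- Restriction `G|_A` of a tree to the taxa in `A` (suppression of degree-two
nodes happens automatically, since equal clusters are identified). -/
noncomputable def restr (G : Clus β) (A : Finset β) : Clus β :=
  (G.image (· ∩ A)).erase ∅

/-- The subtree of `G` rooted at the node with cluster `P`. -/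
noncomputable def below (G : Clus β) (P : Finset β) : Clus β :=
  G.filter (fun E => E ⊆ P)

/-- The tree `G` augmented by a new root whose extra child is a new leaf
labeled by `ρ`. -/
def aug (G : Clus β) (ρ : β) : Clus β :=
  insert {ρ} (insert (insert ρ (grd G)) G)

/-! ## Forests and (acyclic) agreement forests -/

/-- A forest on the taxa set `Y`: components are trees on disjoint taxa sets
covering `Y`. -/
def IsForestOn (Y : Finset β) (F : List (Clus β)) : Prop :=
  (∀ G ∈ F, IsTree G) ∧
  F.Pairwise (fun G H => Disjoint (grd G) (grd H)) ∧
  F.foldr (fun G s => grd G ∪ s) ∅ = Y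

/-- The in-edge of the node with cluster `C` belongs to the minimal subtree
`T(A)` of `T` spanning the taxa in `A`. -/
def EdgeInSpan (T : Clus β) (A C : Finset β) : Prop :=
  C ∈ T ∧ (A ∩ C).Nonempty ∧ ¬ A ⊆ C

/-- The node with cluster `C` belongs to the minimal subtree `T(A)` of `T`
spanning the taxa in `A`. -/
def NodeInSpan (T : Clus β) (A C : Finset β) : Prop :=
  C ∈ T ∧ (A ∩ C).Nonempty ∧ (¬ A ⊆ C ∨ IsLca T A C)

/-- Agreement forest for two already `ρ`-augmented trees `U1`, `U2`:
a forest on the common taxa set, each component a refinement of the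
corresponding restrictions, one component containing `ρ`, and the spanned
subtrees pairwise edge-disjoint in `U1` and in `U2`. -/
def IsAFρ (ρ : β) (U1 U2 : Clus β) (F : List (Clus β)) : Prop :=
  IsForestOn (grd U1) F ∧ grd U2 = grd U1 ∧
  (∀ G ∈ F, IsPhylo (grd G) G) ∧
  (∀ G ∈ F, Refines G (restr U1 (grd G)) ∧ Refines G (restr U2 (grd G))) ∧
  (∃ G ∈ F, ρ ∈ grd G) ∧
  F.Pairwise (fun G H => ∀ C, ¬ (EdgeInSpan U1 (grd G) C ∧ EdgeInSpan U1 (grd H) C)) ∧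
  F.Pairwise (fun G H => ∀ C, ¬ (EdgeInSpan U2 (grd G) C ∧ EdgeInSpan U2 (grd H) C))

/-- Agreement forest for two rooted phylogenetic `X`-trees `T1`, `T2`
(each first augmented by the new taxon `ρ ∉ X`). -/
def IsAF (X : Finset β) (ρ : β) (T1 T2 : Clus β) (F : List (Clus β)) : Prop :=
  IsAFρ ρ (aug T1 ρ) (aug T2 ρ) F

/-- Maximum agreement forest: agreement forest of minimum size. -/
def IsMAF (X : Finset β) (ρ : β) (T1 T2 : Clus β) (F : List (Clus β)) : Prop :=
  IsAF X ρ T1 T2 F ∧ ∀ F', IsAF X ρ T1 T2 F' → F.length ≤ F'.length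

/-- `F'` is obtained from `F` by contracting one edge of one component. -/
def ContractEdgeF (F F' : List (Clus β)) : Prop :=
  ∃ l1 G l2 C, F = l1 ++ G :: l2 ∧ C ∈ G ∧ C ≠ grd G ∧ ¬ IsBlock G C ∧
    F' = l1 ++ G.erase C :: l2

/-- `F` is relevant: no single edge contraction yields again an agreement forest. -/
def RelevantFor (X : Finset β) (ρ : β) (T1 T2 : Clus β) (F : List (Clus β)) : Prop :=
  ∀ F', ContractEdgeF F F' → ¬ IsAF X ρ T1 T2 F'

def IsRelMAF (X : Finset β) (ρ : β) (T1 T2 : Clus β) (F : List (Clus β)) : Prop :=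
  IsMAF X ρ T1 T2 F ∧ RelevantFor X ρ T1 T2 F

/-- Edge of the ancestor-descendant graph `AG(T1,T2,F)`. -/
def AGEdge (ρ : β) (T1 T2 : Clus β) (F : List (Clus β)) (G H : Clus β) : Prop :=
  G ∈ F ∧ H ∈ F ∧ grd G ≠ grd H ∧
  ((∃ C D E, IsLca (aug T1 ρ) (grd G) C ∧ IsLca (aug T1 ρ) (grd H) D ∧
      D ⊆ E ∧ E ⊂ C ∧ EdgeInSpan (aug T1 ρ) (grd G) E) ∨
   (∃ C D E, IsLca (aug T2 ρ) (grd G) C ∧ IsLca (aug T2 ρ) (grd H) D ∧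
      D ⊆ E ∧ E ⊂ C ∧ EdgeInSpan (aug T2 ρ) (grd G) E))

/-- Acyclic agreement forest. -/
def IsAcyclicAF (X : Finset β) (ρ : β) (T1 T2 : Clus β) (F : List (Clus β)) : Prop :=
  IsAF X ρ T1 T2 F ∧ ∀ G, ¬ Relation.TransGen (AGEdge ρ T1 T2 F) G G

/-- Maximum acyclic agreement forest. -/
def IsMAAF (X : Finset β) (ρ : β) (T1 T2 : Clus β) (F : List (Clus β)) : Prop :=
  IsAcyclicAF X ρ T1 T2 F ∧ ∀ F', IsAcyclicAF X ρ T1 T2 F' → F.length ≤ F'.length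

def IsRelMAAF (X : Finset β) (ρ : β) (T1 T2 : Clus β) (F : List (Clus β)) : Prop :=
  IsMAAF X ρ T1 T2 F ∧ RelevantFor X ρ T1 T2 F

/-! ## Rooted phylogenetic networks and the hybridization number -/

/-- A finite rooted digraph with (partially) labeled vertices. -/
structure Net (β : Type) where
  n : ℕ
  edges : Finset (Fin n × Fin n)
  root : Fin n
  lab : Fin n → Option β

def Net.rel (N : Net β) (u v : Fin N.n) : Prop := (u, v) ∈ N.edges

/-- `N` is a rooted phylogenetic network on `X`: acyclic, rooted, leaves
(out-degree 0 nodes) bijectively labeled by `X`, no node with in- and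
out-degree one. -/
def Net.IsPhyloNet (N : Net β) (X : Finset β) : Prop :=
  (∀ v, ¬ Relation.TransGen N.rel v v) ∧
  (∀ v, Relation.ReflTransGen N.rel N.root v) ∧
  (∀ v, (∀ w, ¬ N.rel v w) ↔ (∃ x ∈ X, N.lab v = some x)) ∧
  (∀ v w, N.lab v ≠ none → N.lab v = N.lab w → v = w) ∧
  (∀ x ∈ X, ∃ v, N.lab v = some x) ∧
  (∀ v, ¬ ((∃! u, N.rel u v) ∧ (∃! w, N.rel v w)))

/-- The reticulation number `r(N) = |E| - |V| + 1` of a network. -/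
def Net.ret (N : Net β) : ℕ := N.edges.card + 1 - N.n

/-- `N` displays (a refinement of) the tree `T`: there is a subgraph `E'` in
which every vertex has in-degree at most one, together with an embedding `f`
of the clusters of `T` such that parent/child clusters are connected by
directed `E'`-paths, leaves carry the correct labels, and reachability in
`E'` respects clusters. -/
def Net.Displays (N : Net β) (T : Clus β) : Prop :=
  ∃ E' : Fin N.n → Fin N.n → Prop,
    (∀ u v, E' u v → N.rel u v) ∧
    (∀ v u u', E' u v → E' u' v → u = u') ∧
    ∃ f : Finset β → Fin N.n,
      Relation.ReflTransGen E' N.root (f (grd T)) ∧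
      (∀ C D, IsChild T D C → Relation.TransGen E' (f C) (f D)) ∧
      (∀ x ∈ grd T, N.lab (f {x}) = some x) ∧
      (∀ C ∈ T, ∀ x ∈ grd T, Relation.ReflTransGen E' (f C) (f {x}) → x ∈ C)

/-- The hybridization number `h(T1,T2)`: the minimum reticulation number of a
rooted phylogenetic network on `X` displaying refinements of both trees. -/
noncomputable def hyb (X : Finset β) (T1 T2 : Clus β) : ℕ :=
  sInf { r | ∃ N : Net β, N.IsPhyloNet X ∧ N.Displays T1 ∧ N.Displays T2 ∧ N.ret = r }


/-! ## The machinery of the algorithms allMulMAFs, allMulMAFs*, ProcessCherries -/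

/-- The map `M` used for undoing cherry contractions: it maps a taxa set to
`(X₁, X₂, B)` where `B : Bool` records `⊤`/`⊥`. -/
abbrev MapT (β : Type) := Finset β → Option (Finset β × Finset β × Bool)

/-- A state of the algorithm: the tree `R`, the forest `F`, and the map `M`. -/
abbrev St (β : Type) := Clus β × List (Clus β) × MapT β

/-- Re-map the entry of `A` in `M` to `⊥`. -/
noncomputable def remapBot (M : MapT β) (A : Finset β) : MapT β :=
  fun S => if S = A then (M S).map (fun p => (p.1, p.2.1, false)) else M S

/-- Conditionally re-map the entry of `A` in `M` to `⊥`. -/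
noncomputable def remapIf (c : Prop) (A : Finset β) (M : MapT β) : MapT β :=
  fun S => if S = A ∧ c then (M S).map (fun p => (p.1, p.2.1, false)) else M S

/-- Replace one occurrence of the component `G` in the forest by `new`. -/
def ReplaceIn (F F' : List (Clus β)) (G : Clus β) (new : List (Clus β)) : Prop :=
  ∃ l1 l2, F = l1 ++ G :: l2 ∧ F' = l1 ++ new ++ l2

/-- Remove the leaf with label `A` from `R` (suppressing its parent). -/
noncomputable def rmBlock (R : Clus β) (A : Finset β) : Clus β :=
  restr R (grd R \ A)

/-- Contract the cherry `{A, C}` (in either of the two ways of the paper;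
in the cluster representation both coincide). -/
def conCh (G : Clus β) (A C : Finset β) : Clus β :=
  insert (A ∪ C) ((G.erase A).erase C)

def AllChildrenBlocks (G : Clus β) (P : Finset β) : Prop :=
  ∀ D, IsChild G D P → IsBlock G D

/-- `{A, C}` is a cherry of `R`: two leaves with a common parent all of whose
children are leaves. -/
def CherryR (R : Clus β) (A C : Finset β) : Prop :=
  A ≠ C ∧ ∃ P, IsChild R A P ∧ IsChild R C P ∧ AllChildrenBlocks R P

/-- `{A, C}` is a cherry contained in the tree `G`. -/
def CherryOf (G : Clus β) (A C : Finset β) : Prop :=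
  A ≠ C ∧ IsBlock G A ∧ IsBlock G C ∧ ∃ P, IsChild G A P ∧ IsChild G C P

def CherryF (F : List (Clus β)) (A C : Finset β) : Prop := ∃ G ∈ F, CherryOf G A C

/-- common cherry of `R` and `F`. -/
def IsCommon (R : Clus β) (F : List (Clus β)) (A C : Finset β) : Prop :=
  CherryR R A C ∧ CherryF F A C

/-- contradicting cherry of `R` and `F`. -/
def IsContra (R : Clus β) (F : List (Clus β)) (A C : Finset β) : Prop :=
  CherryR R A C ∧ ¬ CherryF F A C

/-- Leaf `A` of `R` refers to an isolated node of `F`. -/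
def IsolRef (R : Clus β) (F : List (Clus β)) (A : Finset β) : Prop :=
  IsBlock R A ∧ ({A} : Clus β) ∈ F

/-- `P` has at least three children in `G`. -/
def Deg3 (G : Clus β) (P : Finset β) : Prop :=
  ∃ D1 D2 D3, IsChild G D1 P ∧ IsChild G D2 P ∧ IsChild G D3 P ∧
    D1 ≠ D2 ∧ D1 ≠ D3 ∧ D2 ≠ D3

/-- Processing a common cherry (Case 2 of allMulMAFs): contract `{A,C}` in `R`
and in its component of `F`, and record the contraction in `M` (with `⊤` iff
both parents are multifurcating). -/
def ConApply (s : St β) (A C : Finset β) (t : St β) : Prop :=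
  IsCommon s.1 s.2.1 A C ∧
  ∃ G F', G ∈ s.2.1 ∧ CherryOf G A C ∧ ReplaceIn s.2.1 F' G [conCh G A C] ∧
  ∃ PR PG, IsChild s.1 A PR ∧ IsChild G A PG ∧
  ∃ b : Bool, ((b = true) ↔ (Deg3 s.1 PR ∧ Deg3 G PG)) ∧
    t = (conCh s.1 A C, F', Function.update s.2.2 (A ∪ C) (some (A, C, b)))

/-- The update of `M` when cutting the in-edge of the leaf `A` in its
component `G` (Case 3a of allMulMAFs). -/
def CutUpd (G : Clus β) (A : Finset β) (M M' : MapT β) : Prop :=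
  (∃ P D, IsChild G A P ∧ IsChild G D P ∧ D ≠ A ∧
      (∀ E, IsChild G E P → E = A ∨ E = D) ∧ IsBlock G D ∧ M' = remapBot M D) ∨
  ((¬ ∃ P D, IsChild G A P ∧ IsChild G D P ∧ D ≠ A ∧
      (∀ E, IsChild G E P → E = A ∨ E = D) ∧ IsBlock G D) ∧ M' = M)

/-- Cut the in-edge `e_A` of the leaf labeled `A` of a contradicting cherry
`{A, C}` in the forest. -/
def CutApply (s : St β) (A C : Finset β) (t : St β) : Prop :=
  IsContra s.1 s.2.1 A C ∧
  ∃ G F' M', G ∈ s.2.1 ∧ IsBlock G A ∧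
    ReplaceIn s.2.1 F' G [({A} : Clus β), restr G (grd G \ A)] ∧
    CutUpd G A s.2.2 M' ∧ t = (s.1, F', M')

/-- `D` is a node on the path connecting the leaves `A` and `C` in `G`. -/
def PathNode (G : Clus β) (A C D : Finset β) : Prop :=
  D ∈ G ∧ D ≠ A ∧ D ≠ C ∧
  ((A ⊆ D ∧ ¬ C ⊆ D) ∨ (C ⊆ D ∧ ¬ A ⊆ D) ∨ IsLca G (A ∪ C) D)

/-- `E` is the maximal cluster of `G` below `D` containing `A`. -/
def IsMaxSub (G : Clus β) (A D E : Finset β) : Prop :=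
  E ∈ G ∧ A ⊆ E ∧ E ⊂ D ∧ ∀ E' ∈ G, A ⊆ E' → E' ⊂ D → E' ⊆ E

/-- `P` is the ground set of the (grouped) pendant subtree hanging off the
path node `D` of the path connecting `A` and `C`. -/
def PendGround (G : Clus β) (A C D P : Finset β) : Prop :=
  PathNode G A C D ∧
  ((A ⊆ D ∧ ¬ C ⊆ D ∧ ∃ E, IsMaxSub G A D E ∧ P = D \ E) ∨
   (C ⊆ D ∧ ¬ A ⊆ D ∧ ∃ E, IsMaxSub G C D E ∧ P = D \ E) ∨
   (IsLca G (A ∪ C) D ∧ ∃ E1 E2, IsMaxSub G A D E1 ∧ IsMaxSub G C D E2 ∧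
      P = D \ (E1 ∪ E2)))

/-- The (grouped) pendant component with ground set `P`. -/
noncomputable def pendComp (G : Clus β) (P : Finset β) : Clus β :=
  insert P (below G P)

/-- The component still containing `A` and `C` after cutting all pendant
edges of the `A`–`C` path (`L` = lca of `{A, C}`). -/
noncomputable def acComp (G : Clus β) (A C L : Finset β) : Clus β :=
  (G.image (fun D => D \ (L \ (A ∪ C)))).erase ∅

/-- Cutting the set `E_B` of pendant edges of `F[A ∼ C]`: the component `G`
is replaced by the `A`–`C` component together with all grouped pendant
components. -/
def CutPend (G : Clus β) (A C : Finset β) (out : List (Clus β)) : Prop :=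
  ∃ L, IsLca G (A ∪ C) L ∧
  ∃ pend : List (Clus β),
    (∀ Q ∈ pend, ∃ D P, PendGround G A C D P ∧ P.Nonempty ∧ Q = pendComp G P) ∧
    (∀ D P, PendGround G A C D P → P.Nonempty → pendComp G P ∈ pend) ∧
    pend.Nodup ∧ out = acComp G A C L :: pend

/-- The update of `M` in Case 3b of allMulMAFs. -/
def PendUpd (G : Clus β) (A C : Finset β) (M M' : MapT β) : Prop :=
  ∃ PA PC L, IsChild G A PA ∧ IsChild G C PC ∧ IsLca G (A ∪ C) L ∧
    M' = remapIf (PA ≠ L) A (remapIf (PC ≠ L) C M)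

/-- Case 3b (third branch) of allMulMAFs: cut all pendant edges of
`F[A ∼ C]`. -/
def PendApply (s : St β) (A C : Finset β) (t : St β) : Prop :=
  IsContra s.1 s.2.1 A C ∧
  ∃ G new F' M', G ∈ s.2.1 ∧ IsBlock G A ∧ IsBlock G C ∧
    CutPend G A C new ∧ ReplaceIn s.2.1 F' G new ∧
    PendUpd G A C s.2.2 M' ∧ t = (s.1, F', M')

/-- One expansion step of a contracted cherry, as prescribed by `M`
(`b = false` is `⊥`, `b = true` is `⊤`). -/
def ExpandStep (M : MapT β) (F F' : List (Clus β)) : Prop :=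
  ∃ G A X1 X2 b, IsBlock G A ∧ M A = some (X1, X2, b) ∧
    ReplaceIn F F' G
      [if b then insert X1 (insert X2 (G.erase A)) else insert X1 (insert X2 G)]

/-- Exhaustively expand the forest `F` as prescribed in `M`. -/
def Expands (M : MapT β) (F F' : List (Clus β)) : Prop :=
  Relation.ReflTransGen (ExpandStep M) F F' ∧
  ∀ G ∈ F', ∀ A, IsBlock G A → M A = none

/-- `R` consists of a single leaf. -/
def SingleLeaf (R : Clus β) : Prop := ∃ A, R = ({A} : Clus β)

/-- Case 1c of allMulMAFs: remove a leaf of `R` referring to an isolated node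
of `F`. -/
def IsolApply (s : St β) (A : Finset β) (t : St β) : Prop :=
  IsolRef s.1 s.2.1 A ∧ t = (rmBlock s.1 A, s.2.1, remapBot s.2.2 A)

/-- One recursive call of the algorithm allMulMAFs (Cases 1c, 2, 3a, 3b),
with the priority of the cases as in the paper and the abort conditions of
Cases 1a/1b as guards. -/
def AMFStep (k : ℕ) (s t : St β) : Prop :=
  s.2.1.length ≤ k ∧ ¬ SingleLeaf s.1 ∧
  ((∃ A, IsolApply s A t) ∨
   ((¬ ∃ A, IsolRef s.1 s.2.1 A) ∧ ∃ A C, ConApply s A C t) ∨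
   ((¬ ∃ A, IsolRef s.1 s.2.1 A) ∧ (¬ ∃ A C, IsCommon s.1 s.2.1 A C) ∧
     ∃ A C, (CutApply s A C t ∨ PendApply s A C t)))

/-- The initial state: `R = T1`, `F = {T2}` (both `ρ`-augmented), `M = ∅`. -/
def initSt (T1 T2 : Clus β) (ρ : β) : St β :=
  (aug T1 ρ, [aug T2 ρ], fun _ => none)

/-- `out` is one of the forests returned by `allMulMAFs(T1, {T2}, ∅, k)`. -/
def AMFRun (T1 T2 : Clus β) (ρ : β) (k : ℕ) (out : List (Clus β)) : Prop :=
  ∃ s : St β, Relation.ReflTransGen (AMFStep k) (initSt T1 T2 ρ) s ∧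
    SingleLeaf s.1 ∧ s.2.1.length ≤ k ∧ Expands s.2.2 s.2.1 out

/-- allMAFs¹ = allMAAFs¹ of Albrecht (2015) without the acyclicity check; by
Remark 2 of the paper, on binary input trees it processes cherries exactly as
allMulMAFs does. -/
def allMAFs1Run (T1 T2 : Clus β) (ρ : β) (k : ℕ) (out : List (Clus β)) : Prop :=
  AMFRun T1 T2 ρ k out

/-! ### allMulMAFs*: pseudo cherries and preparation -/

/-- proper leaf of `R` and `F`: its counterpart in `F` is a child of a root. -/
def ProperLeaf (R : Clus β) (F : List (Clus β)) (A : Finset β) : Prop :=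
  IsBlock R A ∧ ∃ G ∈ F, IsChild G A (grd G)

/-- The leaves of `R` lying below `D`. -/
noncomputable def blocksIn (R : Clus β) (D : Finset β) : Finset (Finset β) :=
  R.filter (fun E => IsBlock R E ∧ E ⊆ D)

/-- pseudo cherry `{A, C}` for `R` and `F`. -/
def PseudoCherry (R : Clus β) (F : List (Clus β)) (A C : Finset β) : Prop :=
  IsBlock R A ∧ IsBlock R C ∧ A ≠ C ∧
  ∃ L, IsLca R (A ∪ C) L ∧
    (∀ D, IsChild R D L →
      (blocksIn R D).card ≤ ((blocksIn R D).filter (fun B => ProperLeaf R F B)).card + 1) ∧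
    (∃ B, ProperLeaf R F B ∧ B ⊆ L ∧ B ≠ A ∧ B ≠ C)

/-- `B` is a leaf pendant to the path connecting `A` and `C` in `R`. -/
def PendantOnPath (R : Clus β) (A C B : Finset β) : Prop :=
  IsBlock R B ∧ B ≠ A ∧ B ≠ C ∧ ∃ P, IsChild R B P ∧ PathNode R A C P

/-- Cut the leaf labeled `B` out of its component of the forest. -/
def CutB (B : Finset β) (F F' : List (Clus β)) : Prop :=
  ∃ G, G ∈ F ∧ IsBlock G B ∧
    ReplaceIn F F' G [({B} : Clus β), restr G (grd G \ B)]

inductive CutsList : List (Finset β) → List (Clus β) → List (Clus β) → Prop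
  | nil (F) : CutsList [] F F
  | cons (B l F F1 F') : CutB B F F1 → CutsList l F1 F' → CutsList (B :: l) F F'

/-- Preparing a pseudo cherry `{A, C}`: all pendant proper leaves on the
`A`–`C` path are removed from `R`, cut in `F`, and re-mapped to `⊥` in `M`. -/
def Prep (s : St β) (A C : Finset β) (t : St β) : Prop :=
  ∃ l : List (Finset β), l.Nodup ∧
    (∀ B, B ∈ l ↔ (PendantOnPath s.1 A C B ∧ ProperLeaf s.1 s.2.1 B)) ∧
    ∃ F', CutsList l s.2.1 F' ∧
      t = (restr s.1 (grd s.1 \ l.foldr (· ∪ ·) ∅), F',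
           l.foldr (fun B M => remapBot M B) s.2.2)

/-- Prepare `{A, C}` if it is a pseudo cherry; otherwise do nothing. -/
def PrepOpt (s : St β) (A C : Finset β) (t : St β) : Prop :=
  (CherryR s.1 A C ∧ t = s) ∨ (PseudoCherry s.1 s.2.1 A C ∧ Prep s A C t)

/-- One recursive call of the modified algorithm allMulMAFs*. -/
def AMFSStep (k : ℕ) (s t : St β) : Prop :=
  s.2.1.length ≤ k ∧ ¬ SingleLeaf s.1 ∧
  ((∃ A, IsolApply s A t) ∨
   ((¬ ∃ A, IsolRef s.1 s.2.1 A) ∧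
     ∃ A C s0, (CherryR s.1 A C ∨ PseudoCherry s.1 s.2.1 A C) ∧ PrepOpt s A C s0 ∧
       (ConApply s0 A C t ∨ CutApply s0 A C t ∨ PendApply s0 A C t)))

/-- `out` is one of the forests returned by `allMulMAFs*(T1, {T2}, ∅, k)`. -/
def AMFSRun (T1 T2 : Clus β) (ρ : β) (k : ℕ) (out : List (Clus β)) : Prop :=
  ∃ s : St β, Relation.ReflTransGen (AMFSStep k) (initSt T1 T2 ρ) s ∧
    SingleLeaf s.1 ∧ s.2.1.length ≤ k ∧ Expands s.2.2 s.2.1 out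

/-! ### ProcessCherries and cherry lists -/

/-- The four ways `∪_{ac}, ∤_a, ∤_c, ∩_{ac}` of processing a cherry. -/
inductive Phi : Type
  | con : Phi
  | cutL : Phi
  | cutR : Phi
  | path : Phi

/-- A cherry action `Λᵢ = ({a, c}, φᵢ)`. -/
structure Act (β : Type) where
  A : Finset β
  C : Finset β
  phi : Phi

def RemIsolStep (s t : St β) : Prop := ∃ A, IsolApply s A t

/-- Exhaustively remove from `R` every leaf referring to an isolated node
of `F` (line 13 of Algorithm 1). -/
def RemIsolAll (s t : St β) : Prop :=
  Relation.ReflTransGen RemIsolStep s t ∧ ¬ ∃ A, IsolRef t.1 t.2.1 A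

/-- One iteration of `ProcessCherries` on the cherry action `a` (returning a
state rather than `∅`). -/
def PCStep (a : Act β) (s t : St β) : Prop :=
  (CherryR s.1 a.A a.C ∨ PseudoCherry s.1 s.2.1 a.A a.C) ∧
  ∃ s0, PrepOpt s a.A a.C s0 ∧
  ∃ s1, ((a.phi = Phi.con ∧ ConApply s0 a.A a.C s1) ∨
         (a.phi = Phi.cutL ∧ CutApply s0 a.A a.C s1) ∨
         (a.phi = Phi.cutR ∧ CutApply s0 a.C a.A s1) ∨
         (a.phi = Phi.path ∧ PendApply s0 a.A a.C s1)) ∧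
  RemIsolAll s1 t

inductive PCRun : St β → List (Act β) → St β → Prop
  | nil (s) : PCRun s [] s
  | cons (a l s s1 t) : PCStep a s s1 → PCRun s1 l t → PCRun s (a :: l) t

/-- `Λ` is a cherry list for `T1` and `T2`: `ProcessCherries(T1, {T2}, Λ)`
does not return `∅`. -/
def CherryList (T1 T2 : Clus β) (ρ : β) (Λ : List (Act β)) : Prop :=
  ∃ s, PCRun (initSt T1 T2 ρ) Λ s

/-- `out` is the forest returned by `ProcessCherries(T1, {T2}, Λ)` (after the
final expansion). -/
def PCOut (T1 T2 : Clus β) (ρ : β) (Λ : List (Act β)) (out : List (Clus β)) : Prop :=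
  ∃ s, PCRun (initSt T1 T2 ρ) Λ s ∧ Expands s.2.2 s.2.1 out

/-- every component of `Fh` is a binary resolution of a component of `F`. -/
def BinResF (Fh F : List (Clus β)) : Prop := ∀ Gh ∈ Fh, ∃ G ∈ F, BinRes Gh G

/-- pseudo binary resolution of a forest. -/
def PseudoBinResF (Fh F : List (Clus β)) : Prop :=
  ∀ Gh ∈ Fh, ∃ G ∈ F,
    BinRes Gh G ∨ ∃ D, IsChild G D (grd G) ∧ BinRes Gh (below G D)

/-! ### Trees reflecting a forest, the expanded ancestor-descendant graph,
exit nodes, and the refinement step of allMulMAAFs -/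

/-- `U` is a tree reflecting the forest `F` with respect to `T`: a refinement
of `T` in which the components of `F` embed as node-disjoint subtrees. -/
def Reflects (U T : Clus β) (F : List (Clus β)) : Prop :=
  Refines U T ∧
  (∀ G ∈ F, Refines G (restr U (grd G))) ∧
  F.Pairwise (fun G H => ∀ C, ¬ (NodeInSpan U (grd G) C ∧ NodeInSpan U (grd H) C))

/-- `φ⁻¹`: the node `v` of the reflecting tree `U` maps back to the node
`p.2` of the component `p.1` of `F`. -/
def PhiInv (U : Clus β) (F : List (Clus β)) (v : Finset β) (p : Clus β × Finset β) : Prop :=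
  p.1 ∈ F ∧ v ∈ U ∧ NodeInSpan U (grd p.1) v ∧ p.2 = v ∩ grd p.1 ∧ p.2 ∈ p.1

/-- Hybrid edge of `AG^ex` stemming from the reflecting tree `U`, pointing
from the node `x` to the root of the component `H`. -/
def HybEdgeT (U : Clus β) (F : List (Clus β)) (x : Clus β × Finset β) (H : Clus β) : Prop :=
  H ∈ F ∧ ∃ u v', IsLca U (grd H) u ∧ v' ∈ U ∧ u ⊂ v' ∧ PhiInv U F v' x ∧
    ∀ v'' ∈ U, u ⊂ v'' → (∃ q, PhiInv U F v'' q) → v' ⊆ v''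

def Hyb1 (ρ : β) (U1 : Clus β) (F : List (Clus β)) (x y : Clus β × Finset β) : Prop :=
  ∃ H, H ∈ F ∧ ρ ∉ grd H ∧ y = (H, grd H) ∧ HybEdgeT U1 F x H

/-- Edge of the expanded ancestor-descendant graph
`AG^ex(U1, U2, F)`: a tree edge inside a component or a hybrid edge. -/
def ExEdge (ρ : β) (U1 U2 : Clus β) (F : List (Clus β)) (x y : Clus β × Finset β) : Prop :=
  (x.1 ∈ F ∧ x.1 = y.1 ∧ IsChild x.1 y.2 x.2) ∨ Hyb1 ρ U1 F x y ∨ Hyb1 ρ U2 F x y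

/-- Exit node of `AG^ex(U1, U2, F)`: the source of a hybrid edge on a directed
cycle whose preceding hybrid edge along the cycle stems from the other tree. -/
def IsExitNode (ρ : β) (U1 U2 : Clus β) (F : List (Clus β)) (v : Clus β × Finset β) : Prop :=
  ∃ m : ℕ, 0 < m ∧ ∃ c : ZMod m → Clus β × Finset β,
    (∀ i, ExEdge ρ U1 U2 F (c i) (c (i + 1))) ∧
    ∃ i : ZMod m, c i = v ∧ ∃ d : ℕ, 0 < d ∧ d < m ∧
      ((Hyb1 ρ U1 F (c i) (c (i + 1)) ∧
          Hyb1 ρ U2 F (c (i - (d : ZMod m))) (c (i - (d : ZMod m) + 1))) ∨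
       (Hyb1 ρ U2 F (c i) (c (i + 1)) ∧
          Hyb1 ρ U1 F (c (i - (d : ZMod m))) (c (i - (d : ZMod m) + 1)))) ∧
      ∀ e : ℕ, 0 < e → e < d →
        (¬ Hyb1 ρ U1 F (c (i - (e : ZMod m))) (c (i - (e : ZMod m) + 1)) ∧
         ¬ Hyb1 ρ U2 F (c (i - (e : ZMod m))) (c (i - (e : ZMod m) + 1)))

/-- Ground set of the piece obtained at the chain node `E` when cutting every
edge on the path from the node `C` to the root of its component. -/
def ChainGround (G : Clus β) (C E P : Finset β) : Prop :=
  E ∈ G ∧ C ⊂ E ∧ ∃ E', IsMaxSub G C E E' ∧ P = E \ E'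

/-- Fixing the exit node `(G, C)`: cut every edge on the path connecting `C`
with the root of `G`. -/
def FixExit (G : Clus β) (C : Finset β) (out : List (Clus β)) : Prop :=
  ∃ pend : List (Clus β),
    (∀ Q ∈ pend, ∃ E P, ChainGround G C E P ∧ Q = pendComp G P) ∧
    (∀ E P, ChainGround G C E P → pendComp G P ∈ pend) ∧
    pend.Nodup ∧ out = below G C :: pend

/-- Fix one exit node of `AG^ex(U1, U2, F)` in the forest `F`. -/
def FixExitF (ρ : β) (U1 U2 : Clus β) (F F' : List (Clus β)) : Prop :=
  ∃ v, IsExitNode ρ U1 U2 F v ∧ ∃ out, FixExit v.1 v.2 out ∧ ReplaceIn F F' v.1 out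

/-- One round of the refinement step of allMulMAAFs: build reflecting trees
`T1(F)`, `T2(F)`, build `AG^ex`, and fix an exit node. -/
def RefStep (ρ : β) (T1 T2 : Clus β) (F F' : List (Clus β)) : Prop :=
  ∃ U1 U2, Reflects U1 (aug T1 ρ) F ∧ Reflects U2 (aug T2 ρ) F ∧ FixExitF ρ U1 U2 F F'

/-- `out` is one of the forests returned by `allMulMAAFs(T1, {T2}, ∅, k)`:
an agreement forest produced by allMulMAFs, refined by repeatedly fixing exit
nodes into an acyclic agreement forest of size at most `k`. -/
def AMAAFRun (T1 T2 : Clus β) (ρ : β) (k : ℕ) (out : List (Clus β)) : Prop :=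
  ∃ mid, AMFRun T1 T2 ρ k mid ∧
    Relation.ReflTransGen (fun F F' => RefStep ρ T1 T2 F F' ∧ F'.length ≤ k) mid out ∧
    out.length ≤ k ∧ (∀ G, ¬ Relation.TransGen (AGEdge ρ T1 T2 out) G G)

/-! ### Resolving and cutting -/

/-- componentwise refinement of a forest. -/
def ResolvesF (F F' : List (Clus β)) : Prop :=
  List.Forall₂ (fun G G' => Refines G' G) F F'

/-- Cut one edge (the in-edge of the node with cluster `C`) in one component. -/
def CutF (F F' : List (Clus β)) : Prop :=
  ∃ l1 G l2 C, F = l1 ++ G :: l2 ∧ C ∈ G ∧ C ≠ grd G ∧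
    F' = l1 ++ below G C :: restr G (grd G \ C) :: l2

/-- `F'` is obtained from `F` by first resolving some multifurcating nodes and
then cutting some edges. -/
def ObtainedRC (F F' : List (Clus β)) : Prop :=
  ∃ Fm, ResolvesF F Fm ∧ Relation.ReflTransGen CutF Fm F'

/-! ### Auxiliary development -/

section Aux
variable {β : Type} [DecidableEq β]

lemma subset_grd {G : Clus β} {C : Finset β} (hC : C ∈ G) : C ⊆ grd G :=
  Finset.le_sup (f := id) hC

lemma mem_grd_iff {G : Clus β} {x : β} : x ∈ grd G ↔ ∃ C ∈ G, x ∈ C :=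
  Finset.mem_sup

lemma mem_restr {G : Clus β} {Y P : Finset β} :
    P ∈ restr G Y ↔ P ≠ ∅ ∧ ∃ C ∈ G, C ∩ Y = P := by
  unfold restr
  rw [Finset.mem_erase, Finset.mem_image]

namespace IsTree

variable {G : Clus β} (hT : IsTree G)
include hT

lemma nonempty_mem {C : Finset β} (hC : C ∈ G) : C.Nonempty := hT.2.1 C hC

lemma lam {C D : Finset β} (hC : C ∈ G) (hD : D ∈ G) :
    C ⊆ D ∨ D ⊆ C ∨ Disjoint C D := hT.2.2.1 C hC D hD

lemma lam' {C D : Finset β} (hC : C ∈ G) (hD : D ∈ G) (hx : (C ∩ D).Nonempty) :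
    C ⊆ D ∨ D ⊆ C := by
  rcases hT.lam hC hD with h | h | h
  · exact Or.inl h
  · exact Or.inr h
  · rw [Finset.disjoint_iff_inter_eq_empty] at h
    rw [h] at hx
    exact absurd rfl hx.ne_empty

lemma grd_mem : grd G ∈ G := hT.2.2.2.1

lemma exists_block {x : β} (hx : x ∈ grd G) : ∃ A, IsBlock G A ∧ x ∈ A :=
  hT.2.2.2.2 x hx

lemma block_le {B C : Finset β} (hB : IsBlock G B) (hC : C ∈ G) (hsub : (B ∩ C).Nonempty) :
    B ⊆ C := by
  rcases hT.lam' hB.1 hC hsub with h | h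
  · exact h
  · exact (hB.2 C hC h).symm.le

lemma exists_block_below {x : β} {C : Finset β} (hC : C ∈ G) (hx : x ∈ C) :
    ∃ B, IsBlock G B ∧ x ∈ B ∧ B ⊆ C := by
  obtain ⟨B, hB, hxB⟩ := hT.exists_block (subset_grd hC hx)
  exact ⟨B, hB, hxB, hT.block_le hB hC ⟨x, Finset.mem_inter.2 ⟨hxB, hx⟩⟩⟩

lemma blocks_disjoint {A B : Finset β} (hA : IsBlock G A) (hB : IsBlock G B) (hne : A ≠ B) :
    Disjoint A B := by
  rcases hT.lam hA.1 hB.1 with h | h | h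
  · exact absurd (hB.2 A hA.1 h) hne
  · exact absurd (hA.2 B hB.1 h) (Ne.symm hne)
  · exact h

omit hT in
lemma exists_child {B C : Finset β} (hB : B ∈ G) (hC : C ∈ G) (hBC : B ⊂ C) :
    ∃ D, IsChild G D C ∧ B ⊆ D := by
  classical
  have hne : (G.filter (fun E => B ⊆ E ∧ E ⊂ C)).Nonempty :=
    ⟨B, Finset.mem_filter.2 ⟨hB, Finset.Subset.refl B, hBC⟩⟩
  obtain ⟨D, hDmem, hDmax⟩ := (Finset.exists_maximal hne).imp fun D h => And.intro h.1 (fun E hE hlt => lt_irrefl _ (lt_of_lt_of_le hlt (h.2 hE hlt.le)))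
  rw [Finset.mem_filter] at hDmem
  obtain ⟨hDG, hBD, hDC⟩ := hDmem
  refine ⟨D, ⟨hDG, hC, hDC, ?_⟩, hBD⟩
  intro E hE hDE hEC
  by_contra hne'
  exact hDmax E (Finset.mem_filter.2 ⟨hE, hBD.trans hDE, hEC⟩) (lt_of_le_of_ne hDE (Ne.symm hne'))

lemma parent_unique {A P Q : Finset β} (h1 : IsChild G A P) (h2 : IsChild G A Q) : P = Q := by
  have hA : A.Nonempty := hT.nonempty_mem h1.1
  have hint : (P ∩ Q).Nonempty := by
    obtain ⟨x, hx⟩ := hA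
    exact ⟨x, Finset.mem_inter.2 ⟨h1.2.2.1.1 hx, h2.2.2.1.1 hx⟩⟩
  rcases hT.lam' h1.2.1 h2.2.1 hint with h | h
  · rcases eq_or_lt_of_le h with he | hlt
    · exact he
    · exact absurd (h2.2.2.2 P h1.2.1 h1.2.2.1.1 hlt) (fun e => h1.2.2.1.2 (e ▸ h1.2.2.1.1))
  · rcases eq_or_lt_of_le h with he | hlt
    · exact he.symm
    · exact absurd (h1.2.2.2 Q h2.2.1 h2.2.2.1.1 hlt) (fun e => h2.2.2.1.2 (e ▸ h2.2.2.1.1))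

lemma children_disjoint {A C P : Finset β} (hA : IsChild G A P) (hC : IsChild G C P)
    (hne : A ≠ C) : Disjoint A C := by
  rcases hT.lam hA.1 hC.1 with h | h | h
  · exact absurd (hA.2.2.2 C hC.1 h hC.2.2.1).symm hne
  · exact absurd (hC.2.2.2 A hA.1 h hA.2.2.1) hne
  · exact h

lemma parent_eq_union {A C P : Finset β} (hA : IsChild G A P) (hC : IsChild G C P)
    (hne : A ≠ C) (hd : ¬ Deg3 G P) : P = A ∪ C := by
  apply Finset.Subset.antisymm
  · intro x hx
    obtain ⟨B, hB, hxB, hBP⟩ := hT.exists_block_below hA.2.1 hx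
    have hBne : B ≠ P := by
      rintro rfl
      exact absurd (hB.2 A hA.1 hA.2.2.1.1) (ne_of_lt hA.2.2.1)
    have hBPlt : B ⊂ P := lt_of_le_of_ne hBP hBne
    obtain ⟨D, hD, hBD⟩ := exists_child hB.1 hA.2.1 hBPlt
    have : D = A ∨ D = C := by
      by_contra hcon
      push_neg at hcon
      exact hd ⟨A, C, D, hA, hC, hD, hne, Ne.symm hcon.1, Ne.symm hcon.2⟩
    rcases this with rfl | rfl
    · exact Finset.mem_union_left _ (hBD hxB)
    · exact Finset.mem_union_right _ (hBD hxB)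
  · exact Finset.union_subset hA.2.2.1.1 hC.2.2.1.1

lemma two_blocks (h2 : 2 ≤ G.card) :
    ∃ B1 B2, IsBlock G B1 ∧ IsBlock G B2 ∧ B1 ≠ B2 := by
  have hgrd := hT.grd_mem
  have hnotblock : ¬ IsBlock G (grd G) := by
    intro hb
    obtain ⟨C, hC, hCne⟩ : ∃ C ∈ G, C ≠ grd G := by
      by_contra hcon
      push_neg at hcon
      have : G ⊆ {grd G} := fun C hC => Finset.mem_singleton.2 (hcon C hC)
      have := Finset.card_le_card this
      simp at this
      omega
    exact hCne (hb.2 C hC (subset_grd hC))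
  obtain ⟨x, hx⟩ := hT.nonempty_mem hgrd
  obtain ⟨B1, hB1, hxB1⟩ := hT.exists_block hx
  have hB1lt : B1 ⊂ grd G :=
    lt_of_le_of_ne (subset_grd hB1.1) (fun e => hnotblock (e ▸ hB1))
  obtain ⟨y, hy, hyB1⟩ := Finset.exists_of_ssubset hB1lt
  obtain ⟨B2, hB2, hyB2⟩ := hT.exists_block hy
  exact ⟨B1, B2, hB1, hB2, fun e => hyB1 (e ▸ hyB2)⟩

lemma singleton_of_single_block {A : Finset β} (hA : IsBlock G A)
    (huniq : ∀ B, IsBlock G B → B = A) : G = {A} := by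
  have hgrd : grd G = A := by
    apply Finset.Subset.antisymm
    · intro x hx
      obtain ⟨B, hB, hxB⟩ := hT.exists_block hx
      exact (huniq B hB) ▸ hxB
    · exact subset_grd hA.1
  apply Finset.Subset.antisymm
  · intro C hC
    have h1 : C ⊆ A := hgrd ▸ subset_grd hC
    have h2 : A ⊆ C := by
      have hint : (A ∩ C).Nonempty := by
        obtain ⟨x, hx⟩ := hT.nonempty_mem hC
        exact ⟨x, Finset.mem_inter.2 ⟨h1 hx, hx⟩⟩
      rcases hT.lam' hA.1 hC hint with h | h
      · exact h
      · exact le_of_eq (hA.2 C hC h).symm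
    exact Finset.mem_singleton.2 (Finset.Subset.antisymm h1 h2)
  · intro C hC
    rw [Finset.mem_singleton] at hC
    exact hC ▸ hA.1

end IsTree

end Aux

section Restr
variable {β : Type} [DecidableEq β] {G : Clus β} {Y : Finset β}

/-- every block of `G` lies wholly inside or outside `Y`. -/
def BlocksIO (G : Clus β) (Y : Finset β) : Prop :=
  ∀ B, IsBlock G B → B ⊆ Y ∨ B ∩ Y = ∅

lemma restr_root (hT : IsTree G) (hYg : Y ⊆ grd G) (hY : Y.Nonempty) : Y ∈ restr G Y :=
  mem_restr.2 ⟨hY.ne_empty, grd G, hT.grd_mem, Finset.inter_eq_right.2 hYg⟩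

lemma grd_restr (hT : IsTree G) (hYg : Y ⊆ grd G) (hY : Y.Nonempty) : grd (restr G Y) = Y := by
  apply Finset.Subset.antisymm
  · intro x hx
    obtain ⟨C, hC, hxC⟩ := mem_grd_iff.1 hx
    obtain ⟨-, D, -, rfl⟩ := mem_restr.1 hC
    exact (Finset.mem_inter.1 hxC).2
  · exact subset_grd (restr_root hT hYg hY)

lemma block_restr_of_block (hT : IsTree G) {B : Finset β} (hB : IsBlock G B) (hBY : B ⊆ Y) :
    IsBlock (restr G Y) B := by
  constructor
  · exact mem_restr.2 ⟨(hT.nonempty_mem hB.1).ne_empty, B, hB.1, Finset.inter_eq_left.2 hBY⟩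
  · intro Q hQ hQB
    obtain ⟨hQne, E, hE, rfl⟩ := mem_restr.1 hQ
    have hEB : (E ∩ B).Nonempty := by
      obtain ⟨x, hx⟩ := Finset.nonempty_iff_ne_empty.2 hQne
      exact ⟨x, Finset.mem_inter.2 ⟨(Finset.mem_inter.1 hx).1, hQB hx⟩⟩
    rcases hT.lam' hE hB.1 hEB with h | h
    · rw [hB.2 E hE h, Finset.inter_eq_left.2 hBY]
    · exact Finset.Subset.antisymm hQB (fun x hx => Finset.mem_inter.2 ⟨h hx, hBY hx⟩)

lemma restr_block_iff (hT : IsTree G) (hio : BlocksIO G Y) {B : Finset β} :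
    IsBlock (restr G Y) B ↔ IsBlock G B ∧ B ⊆ Y := by
  constructor
  · intro hB
    obtain ⟨hBne, E, hE, rfl⟩ := mem_restr.1 hB.1
    obtain ⟨x, hx⟩ := Finset.nonempty_iff_ne_empty.2 hBne
    have hxY : x ∈ Y := (Finset.mem_inter.1 hx).2
    have hxE : x ∈ E := (Finset.mem_inter.1 hx).1
    obtain ⟨B0, hB0, hxB0, hB0E⟩ := hT.exists_block_below hE hxE
    have hB0Y : B0 ⊆ Y := by
      rcases hio B0 hB0 with h | h
      · exact h
      · exact absurd h (Finset.nonempty_iff_ne_empty.1 ⟨x, Finset.mem_inter.2 ⟨hxB0, hxY⟩⟩)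
    have hB0r : IsBlock (restr G Y) B0 := block_restr_of_block hT hB0 hB0Y
    have hsub : B0 ⊆ E ∩ Y := fun z hz => Finset.mem_inter.2 ⟨hB0E hz, hB0Y hz⟩
    have heq : B0 = E ∩ Y := hB.2 B0 hB0r.1 hsub
    rw [← heq]
    exact ⟨hB0, hB0Y⟩
  · rintro ⟨h1, h2⟩
    exact block_restr_of_block hT h1 h2

lemma restr_tree (hT : IsTree G) (hYg : Y ⊆ grd G) (hY : Y.Nonempty) (hio : BlocksIO G Y) :
    IsTree (restr G Y) := by
  refine ⟨⟨Y, restr_root hT hYg hY⟩, ?_, ?_, ?_, ?_⟩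
  · intro C hC
    exact Finset.nonempty_iff_ne_empty.2 (mem_restr.1 hC).1
  · intro C hC D hD
    obtain ⟨-, E, hE, rfl⟩ := mem_restr.1 hC
    obtain ⟨-, E', hE', rfl⟩ := mem_restr.1 hD
    rcases hT.lam hE hE' with h | h | h
    · exact Or.inl (Finset.inter_subset_inter h (le_refl Y))
    · exact Or.inr (Or.inl (Finset.inter_subset_inter h (le_refl Y)))
    · exact Or.inr (Or.inr (h.mono Finset.inter_subset_left Finset.inter_subset_left))
  · rw [grd_restr hT hYg hY]
    exact restr_root hT hYg hY
  · intro x hx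
    rw [grd_restr hT hYg hY] at hx
    obtain ⟨B, hB, hxB⟩ := hT.exists_block (hYg hx)
    have hBY : B ⊆ Y := by
      rcases hio B hB with h | h
      · exact h
      · exact absurd h (Finset.nonempty_iff_ne_empty.1 ⟨x, Finset.mem_inter.2 ⟨hxB, hx⟩⟩)
    exact ⟨B, block_restr_of_block hT hB hBY, hxB⟩

lemma restr_internal (hT : IsTree G) (hio : BlocksIO G Y) {P : Finset β}
    (hP : P ∈ restr G Y) (hnb : ¬ IsBlock (restr G Y) P) :
    ∃ C ∈ G, ¬ IsBlock G C ∧ C ∩ Y = P := by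
  obtain ⟨hPne, C, hC, rfl⟩ := mem_restr.1 hP
  refine ⟨C, hC, ?_, rfl⟩
  intro hCB
  rcases hio C hCB with h | h
  · exact hnb (by
      rw [Finset.inter_eq_left.2 h]
      exact block_restr_of_block hT hCB h)
  · exact hPne h

lemma restr_mono_ground {U : Clus β} {Z A : Finset β} (hA : A ∈ restr U Y) (hAZ : A ⊆ Z)
    (hZY : Z ⊆ Y) : A ∈ restr U Z := by
  obtain ⟨hne, D, hD, rfl⟩ := mem_restr.1 hA
  refine mem_restr.2 ⟨hne, D, hD, Finset.Subset.antisymm ?_ ?_⟩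
  · intro x hx
    exact Finset.mem_inter.2 ⟨(Finset.mem_inter.1 hx).1, hZY (Finset.mem_inter.1 hx).2⟩
  · intro x hx
    exact Finset.mem_inter.2 ⟨(Finset.mem_inter.1 hx).1, hAZ hx⟩

end Restr

section ConCh
variable {β : Type} [DecidableEq β] {G : Clus β} {A C P : Finset β}

lemma mem_conCh {E : Finset β} :
    E ∈ conCh G A C ↔ E = A ∪ C ∨ (E ∈ G ∧ E ≠ A ∧ E ≠ C) := by
  unfold conCh
  rw [Finset.mem_insert, Finset.mem_erase, Finset.mem_erase]
  tauto

lemma block_pair_cases (hT : IsTree G) (hA : IsBlock G A)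
    (hPA : IsChild G A P) (hPC : IsChild G C P) {E : Finset β} (hE : E ∈ G) (hEA : E ≠ A) :
    A ∩ E = ∅ ∨ A ∪ C ⊆ E := by
  by_cases hint : (A ∩ E).Nonempty
  · right
    have hAE : A ⊆ E := by
      rcases hT.lam' hA.1 hE hint with h | h
      · exact h
      · exact absurd (hA.2 E hE h) hEA
    have hCE : C ⊆ E := by
      have hPE : (P ∩ E).Nonempty := by
        obtain ⟨x, hx⟩ := hT.nonempty_mem hA.1
        exact ⟨x, Finset.mem_inter.2 ⟨hPA.2.2.1.1 hx, hAE hx⟩⟩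
      rcases hT.lam' hPA.2.1 hE hPE with h | h
      · exact hPC.2.2.1.1.trans h
      · rcases eq_or_lt_of_le h with rfl | hlt
        · exact hPC.2.2.1.1
        · exact absurd (hPA.2.2.2 E hE hAE hlt) hEA
    exact Finset.union_subset hAE hCE
  · exact Or.inl (Finset.not_nonempty_iff_eq_empty.1 hint)

lemma cherry_cases (hT : IsTree G) (hA : IsBlock G A) (hC : IsBlock G C)
    (hPA : IsChild G A P) (hPC : IsChild G C P) {E : Finset β} (hE : E ∈ G)
    (hEA : E ≠ A) (hEC : E ≠ C) :
    A ∪ C ⊆ E ∨ (A ∪ C) ∩ E = ∅ := by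
  rcases block_pair_cases hT hA hPA hPC hE hEA with h | h
  · rcases block_pair_cases hT hC hPC hPA hE hEC with h' | h'
    · right
      rw [Finset.union_inter_distrib_right, h, h', Finset.union_empty]
    · left
      rw [Finset.union_comm] at h'
      exact h'
  · exact Or.inl h

variable (hT : IsTree G) (hA : IsBlock G A) (hC : IsBlock G C) (hne : A ≠ C)
  (hPA : IsChild G A P) (hPC : IsChild G C P)
include hT hA hC hne hPA hPC

omit hT hne hPA hPC in
lemma grd_conCh : grd (conCh G A C) = grd G := by
  apply Finset.Subset.antisymm
  · intro x hx
    obtain ⟨E, hE, hxE⟩ := mem_grd_iff.1 hx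
    rcases mem_conCh.1 hE with rfl | ⟨hEG, -, -⟩
    · rcases Finset.mem_union.1 hxE with h | h
      · exact subset_grd hA.1 h
      · exact subset_grd hC.1 h
    · exact subset_grd hEG hxE
  · intro x hx
    obtain ⟨E, hE, hxE⟩ := mem_grd_iff.1 hx
    by_cases hEA : E = A
    · exact mem_grd_iff.2 ⟨A ∪ C, mem_conCh.2 (Or.inl rfl), Finset.mem_union_left _ (hEA ▸ hxE)⟩
    by_cases hEC : E = C
    · exact mem_grd_iff.2 ⟨A ∪ C, mem_conCh.2 (Or.inl rfl), Finset.mem_union_right _ (hEC ▸ hxE)⟩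
    exact mem_grd_iff.2 ⟨E, mem_conCh.2 (Or.inr ⟨hE, hEA, hEC⟩), hxE⟩

omit hne in
lemma conCh_block_union : IsBlock (conCh G A C) (A ∪ C) := by
  constructor
  · exact mem_conCh.2 (Or.inl rfl)
  · intro E hE hEsub
    rcases mem_conCh.1 hE with rfl | ⟨hEG, hEA, hEC⟩
    · rfl
    · rcases cherry_cases hT hA hC hPA hPC hEG hEA hEC with h | h
      · exact Finset.Subset.antisymm hEsub h
      · exfalso
        obtain ⟨x, hx⟩ := hT.nonempty_mem hEG
        exact Finset.eq_empty_iff_forall_notMem.1 h x (Finset.mem_inter.2 ⟨hEsub hx, hx⟩)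

lemma conCh_block_iff {B : Finset β} :
    IsBlock (conCh G A C) B ↔ (B = A ∪ C ∨ (IsBlock G B ∧ B ≠ A ∧ B ≠ C)) := by
  constructor
  · intro hB
    rcases mem_conCh.1 hB.1 with rfl | ⟨hBG, hBA, hBC⟩
    · exact Or.inl rfl
    · rcases cherry_cases hT hA hC hPA hPC hBG hBA hBC with h | h
      · exact Or.inl (hB.2 (A ∪ C) (mem_conCh.2 (Or.inl rfl)) h).symm
      · refine Or.inr ⟨⟨hBG, ?_⟩, hBA, hBC⟩
        intro E hE hEB
        by_cases hEA : E = A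
        · exfalso
          obtain ⟨x, hx⟩ := hT.nonempty_mem hA.1
          refine Finset.eq_empty_iff_forall_notMem.1 h x (Finset.mem_inter.2 ⟨Finset.mem_union_left _ hx, hEB ?_⟩)
          rw [hEA]
          exact hx
        by_cases hEC : E = C
        · exfalso
          obtain ⟨x, hx⟩ := hT.nonempty_mem hC.1
          refine Finset.eq_empty_iff_forall_notMem.1 h x (Finset.mem_inter.2 ⟨Finset.mem_union_right _ hx, hEB ?_⟩)
          rw [hEC]
          exact hx
        exact hB.2 E (mem_conCh.2 (Or.inr ⟨hE, hEA, hEC⟩)) hEB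
  · intro hB
    rcases hB with rfl | ⟨hB, hBA, hBC⟩
    · exact conCh_block_union hT hA hC hPA hPC
    · constructor
      · exact mem_conCh.2 (Or.inr ⟨hB.1, hBA, hBC⟩)
      · intro E hE hEB
        rcases mem_conCh.1 hE with rfl | ⟨hEG, -, -⟩
        · exfalso
          have hAB : A ⊆ B := (Finset.union_subset_iff.1 hEB).1
          exact hBA (hB.2 A hA.1 hAB).symm
        · exact hB.2 E hEG hEB

lemma conCh_tree : IsTree (conCh G A C) := by
  have hroot : grd G ∈ conCh G A C := by
    by_cases hg : grd G = A ∪ C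
    · rw [hg]
      exact mem_conCh.2 (Or.inl rfl)
    · refine mem_conCh.2 (Or.inr ⟨hT.grd_mem, ?_, ?_⟩)
      · rintro rfl
        exact hPA.2.2.1.2 (subset_grd hPA.2.1)
      · rintro rfl
        exact hPC.2.2.1.2 (subset_grd hPC.2.1)
  refine ⟨⟨A ∪ C, mem_conCh.2 (Or.inl rfl)⟩, ?_, ?_, ?_, ?_⟩
  · intro E hE
    rcases mem_conCh.1 hE with rfl | ⟨hEG, -, -⟩
    · obtain ⟨x, hx⟩ := hT.nonempty_mem hA.1
      exact ⟨x, Finset.mem_union_left _ hx⟩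
    · exact hT.nonempty_mem hEG
  · intro E hE D hD
    rcases mem_conCh.1 hE with rfl | ⟨hEG, hEA, hEC⟩
    · rcases mem_conCh.1 hD with rfl | ⟨hDG, hDA, hDC⟩
      · exact Or.inl (le_refl _)
      · rcases cherry_cases hT hA hC hPA hPC hDG hDA hDC with h | h
        · exact Or.inl h
        · exact Or.inr (Or.inr (Finset.disjoint_iff_inter_eq_empty.2 h))
    · rcases mem_conCh.1 hD with rfl | ⟨hDG, hDA, hDC⟩
      · rcases cherry_cases hT hA hC hPA hPC hEG hEA hEC with h | h
        · exact Or.inr (Or.inl h)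
        · refine Or.inr (Or.inr (Finset.disjoint_iff_inter_eq_empty.2 ?_))
          rw [Finset.inter_comm]
          exact h
      · exact hT.lam hEG hDG
  · rw [grd_conCh hA hC]
    exact hroot
  · intro x hx
    rw [grd_conCh hA hC] at hx
    obtain ⟨B, hB, hxB⟩ := hT.exists_block hx
    by_cases hBA : B = A
    · exact ⟨A ∪ C, conCh_block_union hT hA hC hPA hPC,
        Finset.mem_union_left _ (hBA ▸ hxB)⟩
    by_cases hBC : B = C
    · exact ⟨A ∪ C, conCh_block_union hT hA hC hPA hPC,
        Finset.mem_union_right _ (hBC ▸ hxB)⟩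
    exact ⟨B, (conCh_block_iff hT hA hC hne hPA hPC).2 (Or.inr ⟨hB, hBA, hBC⟩), hxB⟩

lemma conCh_internal {Q : Finset β} (hQ : Q ∈ conCh G A C)
    (hnb : ¬ IsBlock (conCh G A C) Q) : Q ∈ G ∧ ¬ IsBlock G Q := by
  rcases mem_conCh.1 hQ with rfl | ⟨hQG, hQA, hQC⟩
  · exact absurd (conCh_block_union hT hA hC hPA hPC) hnb
  · refine ⟨hQG, fun hb => hnb ?_⟩
    exact (conCh_block_iff hT hA hC hne hPA hPC).2 (Or.inr ⟨hb, hQA, hQC⟩)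

end ConCh

section Aug
variable {β : Type} [DecidableEq β] {X : Finset β} {T : Clus β} {ρ : β}

lemma mem_aug {E : Finset β} :
    E ∈ aug T ρ ↔ E = {ρ} ∨ E = insert ρ (grd T) ∨ E ∈ T := by
  unfold aug
  rw [Finset.mem_insert, Finset.mem_insert]

lemma IsPhylo.X_nonempty (h : IsPhylo X T) : X.Nonempty := by
  have := h.1.nonempty_mem h.1.grd_mem
  rwa [h.2.1] at this

lemma IsPhylo.cluster_subset (h : IsPhylo X T) {E : Finset β} (hE : E ∈ T) : E ⊆ X :=
  h.2.1 ▸ subset_grd hE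

lemma grd_aug (h : IsPhylo X T) : grd (aug T ρ) = insert ρ X := by
  apply Finset.Subset.antisymm
  · intro x hx
    obtain ⟨E, hE, hxE⟩ := mem_grd_iff.1 hx
    rcases mem_aug.1 hE with rfl | rfl | hET
    · rw [Finset.mem_singleton] at hxE
      exact hxE ▸ Finset.mem_insert_self _ _
    · rw [h.2.1] at hxE
      exact hxE
    · exact Finset.mem_insert_of_mem (h.cluster_subset hET hxE)
  · intro x hx
    rcases Finset.mem_insert.1 hx with rfl | hxX
    · exact mem_grd_iff.2 ⟨{x}, mem_aug.2 (Or.inl rfl), Finset.mem_singleton_self x⟩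
    · exact mem_grd_iff.2 ⟨insert ρ (grd T), mem_aug.2 (Or.inr (Or.inl rfl)),
        Finset.mem_insert_of_mem (h.2.1.symm ▸ hxX)⟩

lemma aug_tree (hρ : ρ ∉ X) (h : IsPhylo X T) : IsTree (aug T ρ) := by
  have hTX : ∀ E ∈ T, ρ ∉ E := fun E hE hx => hρ (h.cluster_subset hE hx)
  have hsingle : ∀ x ∈ X, IsBlock (aug T ρ) {x} := by
    intro x hxX
    refine ⟨mem_aug.2 (Or.inr (Or.inr (h.2.2 x hxX))), ?_⟩
    intro E hE hEsub
    rcases mem_aug.1 hE with rfl | rfl | hET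
    · have : ρ = x := Finset.mem_singleton.1 (hEsub (Finset.mem_singleton_self ρ))
      exact absurd (this ▸ hxX) hρ
    · have : ρ = x := Finset.mem_singleton.1 (hEsub (Finset.mem_insert_self ρ _))
      exact absurd (this ▸ hxX) hρ
    · obtain ⟨y, hy⟩ := h.1.nonempty_mem hET
      have hyx : y = x := Finset.mem_singleton.1 (hEsub hy)
      apply Finset.Subset.antisymm hEsub
      intro z hz
      rw [Finset.mem_singleton.1 hz, ← hyx]
      exact hy
  have hrho : IsBlock (aug T ρ) {ρ} := by
    refine ⟨mem_aug.2 (Or.inl rfl), ?_⟩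
    intro E hE hEsub
    rcases mem_aug.1 hE with rfl | rfl | hET
    · rfl
    · obtain ⟨y, hyX⟩ := h.X_nonempty
      have : y = ρ := Finset.mem_singleton.1
        (hEsub (Finset.mem_insert_of_mem (h.2.1.symm ▸ hyX)))
      exact absurd (this ▸ hyX) hρ
    · obtain ⟨y, hy⟩ := h.1.nonempty_mem hET
      have : y = ρ := Finset.mem_singleton.1 (hEsub hy)
      exact absurd (hTX E hET) (by rw [← this] at *; exact fun hc => hc hy)
  refine ⟨⟨{ρ}, mem_aug.2 (Or.inl rfl)⟩, ?_, ?_, ?_, ?_⟩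
  · intro E hE
    rcases mem_aug.1 hE with rfl | rfl | hET
    · exact ⟨ρ, Finset.mem_singleton_self ρ⟩
    · exact ⟨ρ, Finset.mem_insert_self _ _⟩
    · exact h.1.nonempty_mem hET
  · have hsub : ∀ E ∈ aug T ρ, E ⊆ insert ρ (grd T) := by
      intro E hE
      rcases mem_aug.1 hE with rfl | rfl | hET
      · intro z hz
        rw [Finset.mem_singleton.1 hz]
        exact Finset.mem_insert_self _ _
      · exact Finset.Subset.refl _
      · exact (subset_grd hET).trans (Finset.subset_insert _ _)
    intro E hE D hD
    rcases mem_aug.1 hE with rfl | rfl | hET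
    · rcases mem_aug.1 hD with rfl | rfl | hDT
      · exact Or.inl (le_refl _)
      · exact Or.inl (fun z hz => (Finset.mem_singleton.1 hz) ▸ Finset.mem_insert_self _ _)
      · refine Or.inr (Or.inr (Finset.disjoint_left.2 ?_))
        intro z hz
        rw [Finset.mem_singleton.1 hz]
        exact hTX D hDT
    · exact Or.inr (Or.inl (hsub D hD))
    · rcases mem_aug.1 hD with rfl | rfl | hDT
      · refine Or.inr (Or.inr (Finset.disjoint_right.2 ?_))
        intro z hz
        rw [Finset.mem_singleton.1 hz]
        exact hTX E hET
      · exact Or.inl (hsub E hE)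
      · exact h.1.lam hET hDT
  · rw [grd_aug h, ← h.2.1]
    exact mem_aug.2 (Or.inr (Or.inl rfl))
  · intro x hx
    rw [grd_aug h] at hx
    rcases Finset.mem_insert.1 hx with rfl | hxX
    · exact ⟨{x}, hrho, Finset.mem_singleton_self x⟩
    · exact ⟨{x}, hsingle x hxX, Finset.mem_singleton_self x⟩

lemma aug_block_iff (hρ : ρ ∉ X) (h : IsPhylo X T) {B : Finset β} :
    IsBlock (aug T ρ) B ↔ B = {ρ} ∨ ∃ x ∈ X, B = {x} := by
  constructor
  · intro hB
    rcases mem_aug.1 hB.1 with rfl | rfl | hBT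
    · exact Or.inl rfl
    · exfalso
      obtain ⟨y, hyX⟩ := h.X_nonempty
      have h1 : ({ρ} : Finset β) ⊆ insert ρ (grd T) := by
        intro z hz
        rw [Finset.mem_singleton.1 hz]
        exact Finset.mem_insert_self _ _
      have := hB.2 {ρ} (mem_aug.2 (Or.inl rfl)) h1
      have hy : y ∈ ({ρ} : Finset β) := this ▸ Finset.mem_insert_of_mem (h.2.1.symm ▸ hyX)
      exact hρ ((Finset.mem_singleton.1 hy) ▸ hyX)
    · obtain ⟨y, hy⟩ := h.1.nonempty_mem hBT
      have hyX : y ∈ X := h.cluster_subset hBT hy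
      have hsub : ({y} : Finset β) ⊆ B := Finset.singleton_subset_iff.2 hy
      have := hB.2 {y} (mem_aug.2 (Or.inr (Or.inr (h.2.2 y hyX)))) hsub
      exact Or.inr ⟨y, hyX, this.symm⟩
  · intro hB
    have ht := aug_tree hρ h
    rcases hB with rfl | ⟨x, hxX, rfl⟩
    · refine ⟨mem_aug.2 (Or.inl rfl), ?_⟩
      intro E hE hEsub
      obtain ⟨z, hz⟩ := ht.nonempty_mem hE
      have : z = ρ := Finset.mem_singleton.1 (hEsub hz)
      subst this
      apply Finset.Subset.antisymm hEsub (Finset.singleton_subset_iff.2 hz)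
    · refine ⟨mem_aug.2 (Or.inr (Or.inr (h.2.2 x hxX))), ?_⟩
      intro E hE hEsub
      obtain ⟨z, hz⟩ := ht.nonempty_mem hE
      have : z = x := Finset.mem_singleton.1 (hEsub hz)
      subst this
      apply Finset.Subset.antisymm hEsub (Finset.singleton_subset_iff.2 hz)

end Aug

section Geo
variable {β : Type} [DecidableEq β] {G : Clus β} {A C L : Finset β}

lemma lca_unique {S L L' : Finset β} (h1 : IsLca G S L) (h2 : IsLca G S L') : L = L' :=
  Finset.Subset.antisymm (h1.2.2 L' h2.1 h2.2.1) (h2.2.2 L h1.1 h1.2.1)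

lemma exists_maxsub (hT : IsTree G) {A D : Finset β} (hA : A ∈ G) (hD : D ∈ G)
    (hAD : A ⊂ D) : ∃ E, IsMaxSub G A D E := by
  have hSne : (G.filter (fun E => A ⊆ E ∧ E ⊂ D)).Nonempty :=
    ⟨A, Finset.mem_filter.2 ⟨hA, Finset.Subset.refl A, hAD⟩⟩
  obtain ⟨E, hEmem, hEmax⟩ := (Finset.exists_maximal hSne).imp fun D h => And.intro h.1 (fun E hE hlt => lt_irrefl _ (lt_of_lt_of_le hlt (h.2 hE hlt.le)))
  rw [Finset.mem_filter] at hEmem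
  refine ⟨E, hEmem.1, hEmem.2.1, hEmem.2.2, ?_⟩
  intro E' hE' hAE' hE'D
  have hcomp : E' ⊆ E ∨ E ⊆ E' := by
    apply hT.lam' hE' hEmem.1
    obtain ⟨x, hx⟩ := hT.nonempty_mem hA
    exact ⟨x, Finset.mem_inter.2 ⟨hAE' hx, hEmem.2.1 hx⟩⟩
  rcases hcomp with h | h
  · exact h
  · rcases eq_or_lt_of_le h with he | hlt
    · exact le_of_eq he.symm
    · exact absurd (hEmax E' (Finset.mem_filter.2 ⟨hE', hAE', hE'D⟩) hlt) (fun hc => hc)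

lemma maxsub_unique {A D E E' : Finset β} (h1 : IsMaxSub G A D E) (h2 : IsMaxSub G A D E') :
    E = E' :=
  Finset.Subset.antisymm (h2.2.2.2 E h1.1 h1.2.1 h1.2.2.1) (h1.2.2.2 E' h2.1 h2.2.1 h2.2.2.1)

variable (hT : IsTree G) (hA : IsBlock G A) (hC : IsBlock G C) (hne : A ≠ C)
  (hL : IsLca G (A ∪ C) L)
include hT hA hC hne hL

lemma A_sub_L : A ⊆ L := (Finset.union_subset_iff.1 hL.2.1).1

lemma C_sub_L : C ⊆ L := (Finset.union_subset_iff.1 hL.2.1).2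

lemma A_ne_L : A ≠ L := by
  rintro rfl
  obtain ⟨x, hx⟩ := hT.nonempty_mem hC.1
  exact Finset.disjoint_left.1 (hT.blocks_disjoint hA hC hne) (C_sub_L hT hA hC hne hL hx) hx

lemma C_ne_L : C ≠ L := by
  rintro rfl
  obtain ⟨x, hx⟩ := hT.nonempty_mem hA.1
  exact Finset.disjoint_left.1 (hT.blocks_disjoint hA hC hne) hx (A_sub_L hT hA hC hne hL hx)

lemma L_pathNode : PathNode G A C L :=
  ⟨hL.1, Ne.symm (A_ne_L hT hA hC hne hL), Ne.symm (C_ne_L hT hA hC hne hL),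
    Or.inr (Or.inr hL)⟩

lemma pathNode_subset_L {D : Finset β} (hD : PathNode G A C D) : D ⊆ L := by
  rcases hD.2.2.2 with ⟨hAD, hCD⟩ | ⟨hCD, hAD⟩ | hlca
  · obtain ⟨x, hx⟩ := hT.nonempty_mem hA.1
    rcases hT.lam' hD.1 hL.1
        ⟨x, Finset.mem_inter.2 ⟨hAD hx, A_sub_L hT hA hC hne hL hx⟩⟩ with h | h
    · exact h
    · exact absurd ((C_sub_L hT hA hC hne hL).trans h) hCD
  · obtain ⟨x, hx⟩ := hT.nonempty_mem hC.1
    rcases hT.lam' hD.1 hL.1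
        ⟨x, Finset.mem_inter.2 ⟨hCD hx, C_sub_L hT hA hC hne hL hx⟩⟩ with h | h
    · exact h
    · exact absurd ((A_sub_L hT hA hC hne hL).trans h) hAD
  · exact le_of_eq (lca_unique hlca hL)

lemma pendGround_subset_D {D P : Finset β} (h : PendGround G A C D P) : P ⊆ D := by
  rcases h.2 with ⟨-, -, E, -, rfl⟩ | ⟨-, -, E, -, rfl⟩ | ⟨-, E1, E2, -, -, rfl⟩ <;>
    exact Finset.sdiff_subset

lemma pendGround_subset (hD : IsTree G) {D P : Finset β} (h : PendGround G A C D P) :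
    P ⊆ L \ (A ∪ C) := by
  have hDL : D ⊆ L := pathNode_subset_L hT hA hC hne hL h.1
  intro x hx
  have hxD : x ∈ D := pendGround_subset_D hT hA hC hne hL h hx
  rcases h.2 with ⟨hAD, hCD, E, hE, rfl⟩ | ⟨hCD, hAD, E, hE, rfl⟩ | ⟨hlca, E1, E2, hE1, hE2, rfl⟩
  · refine Finset.mem_sdiff.2 ⟨hDL hxD, ?_⟩
    intro hxAC
    rcases Finset.mem_union.1 hxAC with hxA | hxC
    · exact (Finset.mem_sdiff.1 hx).2 (hE.2.1 hxA)
    · exact hCD (hT.block_le hC h.1.1 ⟨x, Finset.mem_inter.2 ⟨hxC, hxD⟩⟩)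
  · refine Finset.mem_sdiff.2 ⟨hDL hxD, ?_⟩
    intro hxAC
    rcases Finset.mem_union.1 hxAC with hxA | hxC
    · exact hAD (hT.block_le hA h.1.1 ⟨x, Finset.mem_inter.2 ⟨hxA, hxD⟩⟩)
    · exact (Finset.mem_sdiff.1 hx).2 (hE.2.1 hxC)
  · refine Finset.mem_sdiff.2 ⟨hDL hxD, ?_⟩
    intro hxAC
    apply (Finset.mem_sdiff.1 hx).2
    rcases Finset.mem_union.1 hxAC with hxA | hxC
    · exact Finset.mem_union_left _ (hE1.2.1 hxA)
    · exact Finset.mem_union_right _ (hE2.2.1 hxC)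

lemma pendGround_inter_pathNode {D P D0 : Finset β} (h : PendGround G A C D P)
    (hD0 : PathNode G A C D0) (hlt : D0 ⊂ D) : P ∩ D0 = ∅ := by
  have hdisj : ∀ (E : Finset β), (∀ y ∈ D0, y ∈ E) → P ∩ E = ∅ → P ∩ D0 = ∅ := by
    intro E hsub hPE
    apply Finset.eq_empty_iff_forall_notMem.2
    intro x hx
    have : x ∈ P ∩ E := Finset.mem_inter.2
      ⟨(Finset.mem_inter.1 hx).1, hsub x (Finset.mem_inter.1 hx).2⟩
    rw [hPE] at this
    exact absurd this (Finset.notMem_empty x)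
  rcases h.2 with ⟨hAD, hCD, E, hE, rfl⟩ | ⟨hCD, hAD, E, hE, rfl⟩ | ⟨hlca, E1, E2, hE1, hE2, rfl⟩
  · rcases hD0.2.2.2 with ⟨hAD0, -⟩ | ⟨hCD0, -⟩ | hlca0
    · exact hdisj E (fun y hy => hE.2.2.2 D0 hD0.1 hAD0 hlt hy) (Finset.sdiff_inter_self E D)
    · exact absurd (hCD0.trans hlt.1) hCD
    · exact absurd ((pathNode_subset_L hT hA hC hne hL h.1).trans
        (le_of_eq (lca_unique hL hlca0))) (fun hc => (lt_irrefl D0 (lt_of_lt_of_le hlt hc)).elim)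
  · rcases hD0.2.2.2 with ⟨hAD0, -⟩ | ⟨hCD0, -⟩ | hlca0
    · exact absurd (hAD0.trans hlt.1) hAD
    · exact hdisj E (fun y hy => hE.2.2.2 D0 hD0.1 hCD0 hlt hy) (Finset.sdiff_inter_self E D)
    · exact absurd ((pathNode_subset_L hT hA hC hne hL h.1).trans
        (le_of_eq (lca_unique hL hlca0))) (fun hc => (lt_irrefl D0 (lt_of_lt_of_le hlt hc)).elim)
  · rcases hD0.2.2.2 with ⟨hAD0, -⟩ | ⟨hCD0, -⟩ | hlca0
    · apply hdisj E1 (fun y hy => hE1.2.2.2 D0 hD0.1 hAD0 hlt hy)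
      apply Finset.eq_empty_iff_forall_notMem.2
      intro x hx
      exact (Finset.mem_sdiff.1 (Finset.mem_inter.1 hx).1).2
        (Finset.mem_union_left _ (Finset.mem_inter.1 hx).2)
    · apply hdisj E2 (fun y hy => hE2.2.2.2 D0 hD0.1 hCD0 hlt hy)
      apply Finset.eq_empty_iff_forall_notMem.2
      intro x hx
      exact (Finset.mem_sdiff.1 (Finset.mem_inter.1 hx).1).2
        (Finset.mem_union_right _ (Finset.mem_inter.1 hx).2)
    · have : D = L := lca_unique hlca hL
      subst this
      exact absurd (lca_unique hlca0 hlca) (fun hc => (ne_of_lt hlt) hc)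

lemma pendGround_eq_same {D P P' : Finset β} (h1 : PendGround G A C D P)
    (h2 : PendGround G A C D P') : P = P' := by
  rcases h1.2 with ⟨hAD, hCD, E, hE, rfl⟩ | ⟨hCD, hAD, E, hE, rfl⟩ | ⟨hlca, E1, E2, hE1, hE2, rfl⟩
  · rcases h2.2 with ⟨hAD', hCD', E', hE', rfl⟩ | ⟨hCD', hAD', E', hE', rfl⟩ |
      ⟨hlca', E1', E2', hE1', hE2', rfl⟩
    · rw [maxsub_unique hE hE']
    · exact absurd hCD' hCD
    · exact absurd (Finset.subset_union_right.trans hlca'.2.1) hCD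
  · rcases h2.2 with ⟨hAD', hCD', E', hE', rfl⟩ | ⟨hCD', hAD', E', hE', rfl⟩ |
      ⟨hlca', E1', E2', hE1', hE2', rfl⟩
    · exact absurd hAD' hAD
    · rw [maxsub_unique hE hE']
    · exact absurd (Finset.subset_union_left.trans hlca'.2.1) hAD
  · rcases h2.2 with ⟨hAD', hCD', E', hE', rfl⟩ | ⟨hCD', hAD', E', hE', rfl⟩ |
      ⟨hlca', E1', E2', hE1', hE2', rfl⟩
    · exact absurd (Finset.subset_union_right.trans hlca.2.1) hCD'
    · exact absurd (Finset.subset_union_left.trans hlca.2.1) hAD'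
    · rw [maxsub_unique hE1 hE1', maxsub_unique hE2 hE2']

lemma pendGround_disjoint {D P D' P' : Finset β} (h1 : PendGround G A C D P)
    (h2 : PendGround G A C D' P') (hint : (P ∩ P').Nonempty) : P = P' := by
  obtain ⟨x, hx⟩ := hint
  have hxP : x ∈ P := (Finset.mem_inter.1 hx).1
  have hxP' : x ∈ P' := (Finset.mem_inter.1 hx).2
  have hcomp : D ⊆ D' ∨ D' ⊆ D := by
    apply hT.lam' h1.1.1 h2.1.1
    exact ⟨x, Finset.mem_inter.2 ⟨pendGround_subset_D hT hA hC hne hL h1 hxP,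
      pendGround_subset_D hT hA hC hne hL h2 hxP'⟩⟩
  rcases hcomp with h | h
  · rcases eq_or_lt_of_le h with rfl | hlt
    · exact pendGround_eq_same hT hA hC hne hL h1 h2
    · have := pendGround_inter_pathNode hT hA hC hne hL h2 h1.1 hlt
      exact absurd this (Finset.nonempty_iff_ne_empty.1
        ⟨x, Finset.mem_inter.2 ⟨hxP', pendGround_subset_D hT hA hC hne hL h1 hxP⟩⟩)
  · rcases eq_or_lt_of_le h with he | hlt
    · subst he
      exact pendGround_eq_same hT hA hC hne hL h1 h2
    · have := pendGround_inter_pathNode hT hA hC hne hL h1 h2.1 hlt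
      exact absurd this (Finset.nonempty_iff_ne_empty.1
        ⟨x, Finset.mem_inter.2 ⟨hxP, pendGround_subset_D hT hA hC hne hL h2 hxP'⟩⟩)

end Geo

section Geo2
variable {β : Type} [DecidableEq β] {G : Clus β} {A C L : Finset β}

lemma blocksIO_sdiff_block (hT : IsTree G) (hA : IsBlock G A) : BlocksIO G (grd G \ A) := by
  intro B hB
  by_cases hBA : B = A
  · subst hBA
    right
    apply Finset.eq_empty_iff_forall_notMem.2
    intro x hx
    exact (Finset.mem_sdiff.1 (Finset.mem_inter.1 hx).2).2 (Finset.mem_inter.1 hx).1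
  · left
    intro x hx
    exact Finset.mem_sdiff.2 ⟨subset_grd hB.1 hx,
      fun hxA => Finset.disjoint_left.1 (hT.blocks_disjoint hB hA hBA) hx hxA⟩

lemma sdiff_block_nonempty (hT : IsTree G) (hA : IsBlock G A) (hns : G ≠ {A}) :
    (grd G \ A).Nonempty := by
  have : ¬ ∀ B, IsBlock G B → B = A := by
    intro hall
    exact hns (hT.singleton_of_single_block hA hall)
  push_neg at this
  obtain ⟨B, hB, hBA⟩ := this
  obtain ⟨x, hx⟩ := hT.nonempty_mem hB.1
  exact ⟨x, Finset.mem_sdiff.2 ⟨subset_grd hB.1 hx,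
    fun hxA => Finset.disjoint_left.1 (hT.blocks_disjoint hB hA hBA) hx hxA⟩⟩

lemma two_children_union (hT : IsTree G) {A D P : Finset β} (hPA : IsChild G A P)
    (hPD : IsChild G D P) (hne : D ≠ A)
    (hall : ∀ E, IsChild G E P → E = A ∨ E = D) : P = A ∪ D := by
  apply hT.parent_eq_union hPA hPD (Ne.symm hne)
  rintro ⟨D1, D2, D3, h1, h2, h3, h12, h13, h23⟩
  rcases hall D1 h1 with rfl | rfl <;> rcases hall D2 h2 with rfl | rfl <;>
    rcases hall D3 h3 with rfl | rfl <;> simp_all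

lemma child_inter_sdiff (hT : IsTree G) {A D P : Finset β} (hPA : IsChild G A P)
    (hPD : IsChild G D P) (hne : D ≠ A)
    (hall : ∀ E, IsChild G E P → E = A ∨ E = D) : P ∩ (grd G \ A) = D := by
  have hU : P = A ∪ D := two_children_union hT hPA hPD hne hall
  have hdisj : Disjoint A D := hT.children_disjoint hPA hPD (Ne.symm hne)
  ext x
  constructor
  · intro hx
    obtain ⟨hxP, hxg⟩ := Finset.mem_inter.1 hx
    have hxA : x ∉ A := (Finset.mem_sdiff.1 hxg).2
    rcases Finset.mem_union.1 (hU ▸ hxP) with h | h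
    · exact absurd h hxA
    · exact h
  · intro hx
    refine Finset.mem_inter.2 ⟨hU ▸ Finset.mem_union_right _ hx, Finset.mem_sdiff.2
      ⟨subset_grd hPD.1 hx, fun hxA => Finset.disjoint_left.1 hdisj hxA hx⟩⟩

variable (hT : IsTree G) (hA : IsBlock G A) (hC : IsBlock G C) (hne : A ≠ C)
  (hL : IsLca G (A ∪ C) L)
include hT hA hC hne hL

lemma block_trichotomy {B : Finset β} (hB : IsBlock G B) :
    B ⊆ L \ (A ∪ C) ∨ B ∩ (L \ (A ∪ C)) = ∅ := by
  by_cases hBL : (B ∩ L).Nonempty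
  · have hBLs : B ⊆ L := hT.block_le hB hL.1 hBL
    by_cases hBA : B = A
    · subst hBA
      right
      apply Finset.eq_empty_iff_forall_notMem.2
      intro x hx
      exact (Finset.mem_sdiff.1 (Finset.mem_inter.1 hx).2).2
        (Finset.mem_union_left _ (Finset.mem_inter.1 hx).1)
    by_cases hBC : B = C
    · subst hBC
      right
      apply Finset.eq_empty_iff_forall_notMem.2
      intro x hx
      exact (Finset.mem_sdiff.1 (Finset.mem_inter.1 hx).2).2
        (Finset.mem_union_right _ (Finset.mem_inter.1 hx).1)
    · left
      intro x hx
      refine Finset.mem_sdiff.2 ⟨hBLs hx, ?_⟩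
      intro hxAC
      rcases Finset.mem_union.1 hxAC with h | h
      · exact Finset.disjoint_left.1 (hT.blocks_disjoint hB hA hBA) hx h
      · exact Finset.disjoint_left.1 (hT.blocks_disjoint hB hC hBC) hx h
  · right
    apply Finset.eq_empty_iff_forall_notMem.2
    intro x hx
    exact hBL ⟨x, Finset.mem_inter.2 ⟨(Finset.mem_inter.1 hx).1,
      (Finset.mem_sdiff.1 (Finset.mem_inter.1 hx).2).1⟩⟩

lemma blocksIO_acground : BlocksIO G (grd G \ (L \ (A ∪ C))) := by
  intro B hB
  rcases block_trichotomy hT hA hC hne hL hB with h | h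
  · right
    apply Finset.eq_empty_iff_forall_notMem.2
    intro x hx
    exact (Finset.mem_sdiff.1 (Finset.mem_inter.1 hx).2).2 (h (Finset.mem_inter.1 hx).1)
  · left
    intro x hx
    refine Finset.mem_sdiff.2 ⟨subset_grd hB.1 hx, ?_⟩
    intro hxS
    exact absurd h (Finset.nonempty_iff_ne_empty.1 ⟨x, Finset.mem_inter.2 ⟨hx, hxS⟩⟩)

lemma A_sub_acground : A ⊆ grd G \ (L \ (A ∪ C)) := by
  intro x hx
  exact Finset.mem_sdiff.2 ⟨subset_grd hA.1 hx,
    fun hxS => (Finset.mem_sdiff.1 hxS).2 (Finset.mem_union_left _ hx)⟩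

lemma C_sub_acground : C ⊆ grd G \ (L \ (A ∪ C)) := by
  intro x hx
  exact Finset.mem_sdiff.2 ⟨subset_grd hC.1 hx,
    fun hxS => (Finset.mem_sdiff.1 hxS).2 (Finset.mem_union_right _ hx)⟩

omit hT hA hC hne hL in
lemma acComp_eq_restr : acComp G A C L = restr G (grd G \ (L \ (A ∪ C))) := by
  unfold acComp restr
  congr 1
  apply Finset.image_congr
  intro D hD
  simp only
  ext x
  simp only [Finset.mem_sdiff, Finset.mem_inter]
  constructor
  · rintro ⟨hxD, hxS⟩
    exact ⟨hxD, subset_grd hD hxD, hxS⟩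
  · rintro ⟨hxD, -, hxS⟩
    exact ⟨hxD, hxS⟩

lemma parentA_inter {PA : Finset β} (hPA : IsChild G A PA) (hPAL : PA ≠ L) :
    PA ∩ (grd G \ (L \ (A ∪ C))) = A := by
  have hAL : A ⊆ L := A_sub_L hT hA hC hne hL
  have hPAsubL : PA ⊆ L := by
    have hcomp : PA ⊆ L ∨ L ⊆ PA := by
      apply hT.lam' hPA.2.1 hL.1
      obtain ⟨x, hx⟩ := hT.nonempty_mem hA.1
      exact ⟨x, Finset.mem_inter.2 ⟨hPA.2.2.1.1 hx, hAL hx⟩⟩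
    rcases hcomp with h | h
    · exact h
    · rcases eq_or_lt_of_le h with he | hlt
      · exact absurd he.symm hPAL
      · exact absurd (hPA.2.2.2 L hL.1 hAL hlt) (Ne.symm (A_ne_L hT hA hC hne hL))
  have hCPA : C ∩ PA = ∅ := by
    apply Finset.eq_empty_iff_forall_notMem.2
    intro x hx
    have hCsub : C ⊆ PA := hT.block_le hC hPA.2.1 ⟨x, hx⟩
    have : L ⊆ PA := hL.2.2 PA hPA.2.1 (Finset.union_subset hPA.2.2.1.1 hCsub)
    exact hPAL (Finset.Subset.antisymm hPAsubL this)
  ext x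
  constructor
  · intro hx
    obtain ⟨hxPA, hxg⟩ := Finset.mem_inter.1 hx
    have hxnS : x ∉ L \ (A ∪ C) := (Finset.mem_sdiff.1 hxg).2
    have hxL : x ∈ L := hPAsubL hxPA
    have hxAC : x ∈ A ∪ C := by
      by_contra hc
      exact hxnS (Finset.mem_sdiff.2 ⟨hxL, hc⟩)
    rcases Finset.mem_union.1 hxAC with h | h
    · exact h
    · exact absurd (Finset.mem_inter.2 ⟨h, hxPA⟩) (by rw [hCPA]; exact Finset.notMem_empty x)
  · intro hx
    refine Finset.mem_inter.2 ⟨hPA.2.2.1.1 hx, A_sub_acground hT hA hC hne hL hx⟩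

lemma pend_blocksIO {D P : Finset β} (h : PendGround G A C D P) : BlocksIO G P := by
  intro B hB
  by_cases hint : (B ∩ P).Nonempty
  · left
    obtain ⟨x, hx⟩ := hint
    have hxB : x ∈ B := (Finset.mem_inter.1 hx).1
    have hxP : x ∈ P := (Finset.mem_inter.1 hx).2
    have hPsub := pendGround_subset hT hA hC hne hL hT h
    have hPD := pendGround_subset_D hT hA hC hne hL h
    have hBD : B ⊆ D := by
      have hcomp : B ⊆ D ∨ D ⊆ B := hT.lam' hB.1 h.1.1
        ⟨x, Finset.mem_inter.2 ⟨hxB, hPD hxP⟩⟩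
      rcases hcomp with hc | hc
      · exact hc
      · exfalso
        rcases h.2 with ⟨hAD, -⟩ | ⟨hCD, -⟩ | ⟨hlca, -⟩
        · have : A = B := hB.2 A hA.1 (hAD.trans hc)
          exact (Finset.mem_sdiff.1 (hPsub hxP)).2
            (Finset.mem_union_left _ (this ▸ hxB : x ∈ A))
        · have : C = B := hB.2 C hC.1 (hCD.trans hc)
          exact (Finset.mem_sdiff.1 (hPsub hxP)).2
            (Finset.mem_union_right _ (this ▸ hxB : x ∈ C))
        · have : A = B := hB.2 A hA.1 ((Finset.subset_union_left.trans hlca.2.1).trans hc)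
          exact (Finset.mem_sdiff.1 (hPsub hxP)).2
            (Finset.mem_union_left _ (this ▸ hxB : x ∈ A))
    rcases h.2 with ⟨hAD, hCD, E, hE, rfl⟩ | ⟨hCD, hAD, E, hE, rfl⟩ | ⟨hlca, E1, E2, hE1, hE2, rfl⟩
    · have hBE : B ∩ E = ∅ := by
        apply Finset.eq_empty_iff_forall_notMem.2
        intro y hy
        have : B ⊆ E := hT.block_le hB hE.1 ⟨y, hy⟩
        exact (Finset.mem_sdiff.1 hxP).2 (this hxB)
      intro y hy
      exact Finset.mem_sdiff.2 ⟨hBD hy, fun hyE =>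
        absurd (Finset.mem_inter.2 ⟨hy, hyE⟩) (by rw [hBE]; exact Finset.notMem_empty y)⟩
    · have hBE : B ∩ E = ∅ := by
        apply Finset.eq_empty_iff_forall_notMem.2
        intro y hy
        have : B ⊆ E := hT.block_le hB hE.1 ⟨y, hy⟩
        exact (Finset.mem_sdiff.1 hxP).2 (this hxB)
      intro y hy
      exact Finset.mem_sdiff.2 ⟨hBD hy, fun hyE =>
        absurd (Finset.mem_inter.2 ⟨hy, hyE⟩) (by rw [hBE]; exact Finset.notMem_empty y)⟩
    · have hBE1 : B ∩ E1 = ∅ := by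
        apply Finset.eq_empty_iff_forall_notMem.2
        intro y hy
        have : B ⊆ E1 := hT.block_le hB hE1.1 ⟨y, hy⟩
        exact (Finset.mem_sdiff.1 hxP).2 (Finset.mem_union_left _ (this hxB))
      have hBE2 : B ∩ E2 = ∅ := by
        apply Finset.eq_empty_iff_forall_notMem.2
        intro y hy
        have : B ⊆ E2 := hT.block_le hB hE2.1 ⟨y, hy⟩
        exact (Finset.mem_sdiff.1 hxP).2 (Finset.mem_union_right _ (this hxB))
      intro y hy
      refine Finset.mem_sdiff.2 ⟨hBD hy, ?_⟩
      intro hyE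
      rcases Finset.mem_union.1 hyE with h' | h'
      · exact absurd (Finset.mem_inter.2 ⟨hy, h'⟩) (by rw [hBE1]; exact Finset.notMem_empty y)
      · exact absurd (Finset.mem_inter.2 ⟨hy, h'⟩) (by rw [hBE2]; exact Finset.notMem_empty y)
  · right
    exact Finset.not_nonempty_iff_eq_empty.1 hint

end Geo2

section Geo3
variable {β : Type} [DecidableEq β] {G : Clus β} {A C L : Finset β}
variable (hT : IsTree G) (hA : IsBlock G A) (hC : IsBlock G C) (hne : A ≠ C)
  (hL : IsLca G (A ∪ C) L)
include hT hA hC hne hL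

lemma pend_claim {D P E : Finset β} (h : PendGround G A C D P) (hE : E ∈ G)
    (hint : (E ∩ P).Nonempty) : E ⊆ P ∨ P ⊆ E := by
  obtain ⟨x, hx⟩ := hint
  have hxE : x ∈ E := (Finset.mem_inter.1 hx).1
  have hxP : x ∈ P := (Finset.mem_inter.1 hx).2
  have hPD := pendGround_subset_D hT hA hC hne hL h
  have hcomp : E ⊆ D ∨ D ⊆ E := hT.lam' hE h.1.1 ⟨x, Finset.mem_inter.2 ⟨hxE, hPD hxP⟩⟩
  rcases hcomp with hED | hDE
  · rcases eq_or_lt_of_le hED with rfl | hlt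
    · exact Or.inr hPD
    · left
      rcases h.2 with ⟨hAD, hCD, E0, hE0, rfl⟩ | ⟨hCD, hAD, E0, hE0, rfl⟩ |
        ⟨hlca, E1, E2, hE1, hE2, rfl⟩
      · have hEE0 : E ∩ E0 = ∅ := by
          apply Finset.eq_empty_iff_forall_notMem.2
          intro y hy
          rcases hT.lam' hE hE0.1 ⟨y, hy⟩ with hc | hc
          · exact (Finset.mem_sdiff.1 hxP).2 (hc hxE)
          · have : E ⊆ E0 := hE0.2.2.2 E hE (hE0.2.1.trans hc) hlt
            exact (Finset.mem_sdiff.1 hxP).2 (this hxE)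
        intro y hy
        exact Finset.mem_sdiff.2 ⟨hED hy, fun hyE0 =>
          absurd (Finset.mem_inter.2 ⟨hy, hyE0⟩) (by rw [hEE0]; exact Finset.notMem_empty y)⟩
      · have hEE0 : E ∩ E0 = ∅ := by
          apply Finset.eq_empty_iff_forall_notMem.2
          intro y hy
          rcases hT.lam' hE hE0.1 ⟨y, hy⟩ with hc | hc
          · exact (Finset.mem_sdiff.1 hxP).2 (hc hxE)
          · have : E ⊆ E0 := hE0.2.2.2 E hE (hE0.2.1.trans hc) hlt
            exact (Finset.mem_sdiff.1 hxP).2 (this hxE)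
        intro y hy
        exact Finset.mem_sdiff.2 ⟨hED hy, fun hyE0 =>
          absurd (Finset.mem_inter.2 ⟨hy, hyE0⟩) (by rw [hEE0]; exact Finset.notMem_empty y)⟩
      · have hEE1 : E ∩ E1 = ∅ := by
          apply Finset.eq_empty_iff_forall_notMem.2
          intro y hy
          rcases hT.lam' hE hE1.1 ⟨y, hy⟩ with hc | hc
          · exact (Finset.mem_sdiff.1 hxP).2 (Finset.mem_union_left _ (hc hxE))
          · have : E ⊆ E1 := hE1.2.2.2 E hE (hE1.2.1.trans hc) hlt
            exact (Finset.mem_sdiff.1 hxP).2 (Finset.mem_union_left _ (this hxE))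
        have hEE2 : E ∩ E2 = ∅ := by
          apply Finset.eq_empty_iff_forall_notMem.2
          intro y hy
          rcases hT.lam' hE hE2.1 ⟨y, hy⟩ with hc | hc
          · exact (Finset.mem_sdiff.1 hxP).2 (Finset.mem_union_right _ (hc hxE))
          · have : E ⊆ E2 := hE2.2.2.2 E hE (hE2.2.1.trans hc) hlt
            exact (Finset.mem_sdiff.1 hxP).2 (Finset.mem_union_right _ (this hxE))
        intro y hy
        refine Finset.mem_sdiff.2 ⟨hED hy, ?_⟩
        intro hyU
        rcases Finset.mem_union.1 hyU with h' | h'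
        · exact absurd (Finset.mem_inter.2 ⟨hy, h'⟩) (by rw [hEE1]; exact Finset.notMem_empty y)
        · exact absurd (Finset.mem_inter.2 ⟨hy, h'⟩) (by rw [hEE2]; exact Finset.notMem_empty y)
  · exact Or.inr (hPD.trans hDE)

lemma pendComp_eq_restr {D P : Finset β} (h : PendGround G A C D P) (hPne : P.Nonempty) :
    pendComp G P = restr G P := by
  ext Q
  unfold pendComp below
  rw [Finset.mem_insert, Finset.mem_filter]
  constructor
  · rintro (rfl | ⟨hQG, hQP⟩)
    · exact mem_restr.2 ⟨hPne.ne_empty, D, h.1.1,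
        Finset.inter_eq_right.2 (pendGround_subset_D hT hA hC hne hL h)⟩
    · exact mem_restr.2 ⟨(hT.nonempty_mem hQG).ne_empty, Q, hQG, Finset.inter_eq_left.2 hQP⟩
  · intro hQ
    obtain ⟨hQne, E, hEG, rfl⟩ := mem_restr.1 hQ
    rcases pend_claim hT hA hC hne hL h hEG (Finset.nonempty_iff_ne_empty.2 hQne) with hc | hc
    · right
      rw [Finset.inter_eq_left.2 hc]
      exact ⟨hEG, hc⟩
    · left
      exact Finset.inter_eq_right.2 hc

lemma block_pend_cover {B : Finset β} (hB : IsBlock G B) (hBS : B ⊆ L \ (A ∪ C)) :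
    ∃ D P, PendGround G A C D P ∧ B ⊆ P := by
  classical
  have hBne := hT.nonempty_mem hB.1
  have hBnAC : ∀ x ∈ B, x ∉ A ∪ C := fun x hx => (Finset.mem_sdiff.1 (hBS hx)).2
  have hSne : (G.filter (fun D => PathNode G A C D ∧ B ⊆ D)).Nonempty :=
    ⟨L, Finset.mem_filter.2 ⟨hL.1, L_pathNode hT hA hC hne hL,
      fun x hx => (Finset.mem_sdiff.1 (hBS hx)).1⟩⟩
  obtain ⟨D, hDmem, hDmin⟩ := (Finset.exists_minimal hSne).imp fun D h => And.intro h.1 (fun E hE => h.not_lt (y := E) hE)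
  rw [Finset.mem_filter] at hDmem
  obtain ⟨hDG, hDpath, hBD⟩ := hDmem
  have hnoA : B ≠ A := by
    rintro rfl
    obtain ⟨x, hx⟩ := hBne
    exact hBnAC x hx (Finset.mem_union_left _ hx)
  have hnoC : B ≠ C := by
    rintro rfl
    obtain ⟨x, hx⟩ := hBne
    exact hBnAC x hx (Finset.mem_union_right _ hx)
  have hmini : ∀ E, E ∈ G → E ⊂ D → PathNode G A C E → B ∩ E = ∅ := by
    intro E hEG hED hEpath
    apply Finset.eq_empty_iff_forall_notMem.2
    intro x hx
    have hBE : B ⊆ E := hT.block_le hB hEG ⟨x, hx⟩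
    exact hDmin E (Finset.mem_filter.2 ⟨hEG, hEpath, hBE⟩) hED
  have hblocksub : ∀ {E : Finset β}, E ∈ G → B ∩ E ≠ ∅ → B ⊆ E := by
    intro E hEG hint
    obtain ⟨x, hx⟩ := Finset.nonempty_iff_ne_empty.2 hint
    exact hT.block_le hB hEG ⟨x, hx⟩
  rcases hDpath.2.2.2 with ⟨hAD, hCD⟩ | ⟨hCD, hAD⟩ | hlca
  · have hADlt : A ⊂ D := by
      rcases eq_or_lt_of_le hAD with rfl | hlt
      · exact absurd (hA.2 B hB.1 hBD) hnoA
      · exact hlt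
    obtain ⟨E, hE⟩ := exists_maxsub hT hA.1 hDG hADlt
    refine ⟨D, D \ E, ⟨hDpath, Or.inl ⟨hAD, hCD, E, hE, rfl⟩⟩, ?_⟩
    have hBE : B ∩ E = ∅ := by
      by_contra hc
      have hBEsub : B ⊆ E := hblocksub hE.1 hc
      have hEA : E ≠ A := by
        rintro rfl
        obtain ⟨x, hx⟩ := hBne
        exact hBnAC x hx (Finset.mem_union_left _ (hBEsub hx))
      have hEC : E ≠ C := by
        rintro rfl
        obtain ⟨x, hx⟩ := hT.nonempty_mem hA.1
        exact Finset.disjoint_left.1 (hT.blocks_disjoint hA hC hne) hx (hE.2.1 hx)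
      have hEpath : PathNode G A C E :=
        ⟨hE.1, hEA, hEC, Or.inl ⟨hE.2.1, fun hCE => hCD (hCE.trans hE.2.2.1.1)⟩⟩
      exact hc (hmini E hE.1 hE.2.2.1 hEpath)
    intro x hx
    exact Finset.mem_sdiff.2 ⟨hBD hx, fun hxE =>
      absurd (Finset.mem_inter.2 ⟨hx, hxE⟩) (by rw [hBE]; exact Finset.notMem_empty x)⟩
  · have hCDlt : C ⊂ D := by
      rcases eq_or_lt_of_le hCD with rfl | hlt
      · exact absurd (hC.2 B hB.1 hBD) hnoC
      · exact hlt
    obtain ⟨E, hE⟩ := exists_maxsub hT hC.1 hDG hCDlt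
    refine ⟨D, D \ E, ⟨hDpath, Or.inr (Or.inl ⟨hCD, hAD, E, hE, rfl⟩)⟩, ?_⟩
    have hBE : B ∩ E = ∅ := by
      by_contra hc
      have hBEsub : B ⊆ E := hblocksub hE.1 hc
      have hEC : E ≠ C := by
        rintro rfl
        obtain ⟨x, hx⟩ := hBne
        exact hBnAC x hx (Finset.mem_union_right _ (hBEsub hx))
      have hEA : E ≠ A := by
        rintro rfl
        obtain ⟨x, hx⟩ := hT.nonempty_mem hC.1
        exact Finset.disjoint_left.1 (hT.blocks_disjoint hA hC hne) (hE.2.1 hx) hx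
      have hEpath : PathNode G A C E :=
        ⟨hE.1, hEA, hEC, Or.inr (Or.inl ⟨hE.2.1, fun hAE => hAD (hAE.trans hE.2.2.1.1)⟩)⟩
      exact hc (hmini E hE.1 hE.2.2.1 hEpath)
    intro x hx
    exact Finset.mem_sdiff.2 ⟨hBD hx, fun hxE =>
      absurd (Finset.mem_inter.2 ⟨hx, hxE⟩) (by rw [hBE]; exact Finset.notMem_empty x)⟩
  · have hAD : A ⊆ D := Finset.subset_union_left.trans hlca.2.1
    have hCD : C ⊆ D := Finset.subset_union_right.trans hlca.2.1
    have hADlt : A ⊂ D := by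
      rcases eq_or_lt_of_le hAD with rfl | hlt
      · exact absurd (hA.2 B hB.1 hBD) hnoA
      · exact hlt
    have hCDlt : C ⊂ D := by
      rcases eq_or_lt_of_le hCD with rfl | hlt
      · exact absurd (hC.2 B hB.1 hBD) hnoC
      · exact hlt
    obtain ⟨E1, hE1⟩ := exists_maxsub hT hA.1 hDG hADlt
    obtain ⟨E2, hE2⟩ := exists_maxsub hT hC.1 hDG hCDlt
    refine ⟨D, D \ (E1 ∪ E2), ⟨hDpath, Or.inr (Or.inr ⟨hlca, E1, E2, hE1, hE2, rfl⟩)⟩, ?_⟩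
    have hBE1 : B ∩ E1 = ∅ := by
      by_contra hc
      have hBEsub : B ⊆ E1 := hblocksub hE1.1 hc
      have hEA : E1 ≠ A := by
        rintro rfl
        obtain ⟨x, hx⟩ := hBne
        exact hBnAC x hx (Finset.mem_union_left _ (hBEsub hx))
      have hEC : E1 ≠ C := by
        rintro rfl
        obtain ⟨x, hx⟩ := hT.nonempty_mem hA.1
        exact Finset.disjoint_left.1 (hT.blocks_disjoint hA hC hne) hx (hE1.2.1 hx)
      have hEpath : PathNode G A C E1 :=
        ⟨hE1.1, hEA, hEC, Or.inl ⟨hE1.2.1, fun hCE =>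
          hE1.2.2.1.2 (hlca.2.2 E1 hE1.1 (Finset.union_subset hE1.2.1 hCE))⟩⟩
      exact hc (hmini E1 hE1.1 hE1.2.2.1 hEpath)
    have hBE2 : B ∩ E2 = ∅ := by
      by_contra hc
      have hBEsub : B ⊆ E2 := hblocksub hE2.1 hc
      have hEC : E2 ≠ C := by
        rintro rfl
        obtain ⟨x, hx⟩ := hBne
        exact hBnAC x hx (Finset.mem_union_right _ (hBEsub hx))
      have hEA : E2 ≠ A := by
        rintro rfl
        obtain ⟨x, hx⟩ := hT.nonempty_mem hC.1
        exact Finset.disjoint_left.1 (hT.blocks_disjoint hA hC hne) (hE2.2.1 hx) hx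
      have hEpath : PathNode G A C E2 :=
        ⟨hE2.1, hEA, hEC, Or.inr (Or.inl ⟨hE2.2.1, fun hAE =>
          hE2.2.2.1.2 (hlca.2.2 E2 hE2.1 (Finset.union_subset hAE hE2.2.1))⟩)⟩
      exact hc (hmini E2 hE2.1 hE2.2.2.1 hEpath)
    intro x hx
    refine Finset.mem_sdiff.2 ⟨hBD hx, ?_⟩
    intro hxU
    rcases Finset.mem_union.1 hxU with h' | h'
    · exact absurd (Finset.mem_inter.2 ⟨hx, h'⟩) (by rw [hBE1]; exact Finset.notMem_empty x)
    · exact absurd (Finset.mem_inter.2 ⟨hx, h'⟩) (by rw [hBE2]; exact Finset.notMem_empty x)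

end Geo3

section RunInv
variable {β : Type} [DecidableEq β]

lemma restr_inter_mem {U : Clus β} {Cc Yb Z : Finset β} (h : Cc ∈ restr U Yb) (hZ : Z ⊆ Yb)
    (hne : Cc ∩ Z ≠ ∅) : Cc ∩ Z ∈ restr U Z := by
  obtain ⟨-, D, hD, rfl⟩ := mem_restr.1 h
  refine mem_restr.2 ⟨hne, D, hD, ?_⟩
  ext x
  simp only [Finset.mem_inter]
  constructor
  · rintro ⟨h1, h2⟩
    exact ⟨⟨h1, hZ h2⟩, h2⟩
  · rintro ⟨⟨h1, -⟩, h2⟩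
    exact ⟨h1, h2⟩

lemma mem_restr_grd {U : Clus β} {P : Finset β} (hP : P ∈ U) (hne : P.Nonempty) :
    P ∈ restr U (grd U) :=
  mem_restr.2 ⟨hne.ne_empty, P, hP, Finset.inter_eq_left.2 (subset_grd hP)⟩

lemma root_restr {U : Clus β} {Y : Finset β} (hg : grd U ∈ U) (hY : Y ⊆ grd U)
    (hne : Y.Nonempty) : Y ∈ restr U Y :=
  mem_restr.2 ⟨hne.ne_empty, grd U, hg, Finset.inter_eq_right.2 hY⟩

lemma grd_singleton {A : Finset β} : grd ({A} : Clus β) = A := Finset.sup_singleton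

lemma singleton_tree {A : Finset β} (h : A.Nonempty) : IsTree ({A} : Clus β) := by
  refine ⟨⟨A, Finset.mem_singleton_self A⟩, ?_, ?_, ?_, ?_⟩
  · intro E hE
    rw [Finset.mem_singleton.1 hE]
    exact h
  · intro E hE D hD
    rw [Finset.mem_singleton.1 hE, Finset.mem_singleton.1 hD]
    exact Or.inl (Finset.Subset.refl A)
  · rw [grd_singleton]
    exact Finset.mem_singleton_self A
  · intro x hx
    rw [grd_singleton] at hx
    exact ⟨A, ⟨Finset.mem_singleton_self A,
      fun E hE _ => Finset.mem_singleton.1 hE⟩, hx⟩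

lemma isBlock_singleton {A : Finset β} : IsBlock ({A} : Clus β) A :=
  ⟨Finset.mem_singleton_self A, fun E hE _ => Finset.mem_singleton.1 hE⟩

lemma grd_sub_of_blocks {G R : Clus β} (hTG : IsTree G)
    (hb : ∀ B, IsBlock G B → IsBlock R B) : grd G ⊆ grd R := by
  intro x hx
  obtain ⟨B, hB, hxB⟩ := hTG.exists_block hx
  exact subset_grd (hb B hB).1 hxB

lemma replace_mem_new {F F' : List (Clus β)} {G : Clus β} {new : List (Clus β)}
    (h : ReplaceIn F F' G new) {H : Clus β} (hH : H ∈ new) : H ∈ F' := by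
  obtain ⟨l1, l2, -, rfl⟩ := h
  exact List.mem_append_left l2 (List.mem_append_right l1 hH)

lemma replace_mem_cases {F F' : List (Clus β)} {G : Clus β} {new : List (Clus β)}
    (h : ReplaceIn F F' G new) {H : Clus β} (hH : H ∈ F') : H ∈ new ∨ H ∈ F := by
  obtain ⟨l1, l2, rfl, rfl⟩ := h
  simp only [List.mem_append, List.mem_cons] at hH ⊢
  tauto

lemma replace_witness {F F' : List (Clus β)} {G : Clus β} {new : List (Clus β)}
    (h : ReplaceIn F F' G new) {H : Clus β} (hH : H ∈ F) : H = G ∨ H ∈ F' := by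
  obtain ⟨l1, l2, rfl, rfl⟩ := h
  simp only [List.mem_append, List.mem_cons] at hH ⊢
  tauto

lemma replace_forall {F F' : List (Clus β)} {G : Clus β} {new : List (Clus β)}
    (h : ReplaceIn F F' G new) {p : Clus β → Prop} (hF : ∀ H ∈ F, p H)
    (hnew : ∀ H ∈ new, p H) : ∀ H ∈ F', p H := by
  intro H hH
  rcases replace_mem_cases h hH with h1 | h1
  · exact hnew H h1
  · exact hF H h1

lemma replace_pairwise_disjoint {F F' : List (Clus β)} {G : Clus β} {new : List (Clus β)}
    (h : ReplaceIn F F' G new)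
    (hF : F.Pairwise (fun G H => Disjoint (grd G) (grd H)))
    (hnew : new.Pairwise (fun G H => Disjoint (grd G) (grd H)))
    (hsub : ∀ H ∈ new, grd H ⊆ grd G) :
    F'.Pairwise (fun G H => Disjoint (grd G) (grd H)) := by
  obtain ⟨l1, l2, rfl, rfl⟩ := h
  rw [List.append_assoc]
  rw [List.pairwise_append] at hF ⊢
  obtain ⟨h1, h2, h3⟩ := hF
  rw [List.pairwise_cons] at h2
  obtain ⟨hG2, hl2⟩ := h2
  refine ⟨h1, ?_, ?_⟩
  · rw [List.pairwise_append]
    refine ⟨hnew, hl2, ?_⟩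
    intro a ha b hb
    exact Finset.disjoint_of_subset_left (hsub a ha) (hG2 b hb)
  · intro a ha b hb
    rcases List.mem_append.1 hb with hb1 | hb1
    · exact Finset.disjoint_of_subset_right (hsub b hb1)
        (h3 a ha G (List.mem_cons_self))
    · exact h3 a ha b (List.mem_cons_of_mem _ hb1)

/-- The run invariant. -/
structure Inv (U1 U2 : Clus β) (s : St β) : Prop where
  treeR : IsTree s.1
  treesF : ∀ G ∈ s.2.1, IsTree G
  grdR : grd s.1 ⊆ grd U1
  grdF : ∀ G ∈ s.2.1, grd G ⊆ grd U2
  intR : ∀ P ∈ s.1, ¬ IsBlock s.1 P → P ∈ restr U1 (grd s.1)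
  intF : ∀ G ∈ s.2.1, ∀ P ∈ G, ¬ IsBlock G P → P ∈ restr U2 (grd G)
  disj : s.2.1.Pairwise (fun G H => Disjoint (grd G) (grd H))
  blocksR : ∀ G ∈ s.2.1, (∃ A, G = {A}) ∨ ∀ B, IsBlock G B → IsBlock s.1 B
  mwf : ∀ A X1 X2 b, s.2.2 A = some (X1, X2, b) →
    X1 ∪ X2 = A ∧ X1 ∩ X2 = ∅ ∧ X1.Nonempty ∧ X2.Nonempty
  mfalse : ∀ A X1 X2, s.2.2 A = some (X1, X2, false) →
    ∃ G ∈ s.2.1, ∃ B, IsBlock G B ∧ A ⊆ B ∧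
      (A ∈ restr U1 (grd G) ∨ A ∈ restr U2 (grd G))

lemma intF_piece {U G : Clus β} {Y : Finset β} (hT : IsTree G) (hYg : Y ⊆ grd G)
    (hio : BlocksIO G Y)
    (hint : ∀ P ∈ G, ¬ IsBlock G P → P ∈ restr U (grd G)) :
    ∀ P ∈ restr G Y, ¬ IsBlock (restr G Y) P → P ∈ restr U Y := by
  intro P hP hnb
  have hPne : P ≠ ∅ := (mem_restr.1 hP).1
  obtain ⟨C0, hC0, hC0nb, hPeq⟩ := restr_internal hT hio hP hnb
  rw [← hPeq] at hPne ⊢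
  exact restr_inter_mem (hint C0 hC0 hC0nb) hYg hPne

end RunInv

section Preserve
variable {β : Type} [DecidableEq β] {U1 U2 : Clus β}

lemma inv_init {X : Finset β} {ρ : β} (hρ : ρ ∉ X) {T1 T2 : Clus β}
    (h1 : IsPhylo X T1) (h2 : IsPhylo X T2) :
    Inv (aug T1 ρ) (aug T2 ρ) (initSt T1 T2 ρ) := by
  have ht1 := aug_tree hρ h1
  have ht2 := aug_tree hρ h2
  have hmem : ∀ G ∈ (initSt T1 T2 ρ).2.1, G = aug T2 ρ := by
    intro G hG
    exact List.mem_singleton.1 hG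
  refine ⟨ht1, ?_, Finset.Subset.refl _, ?_, ?_, ?_, ?_, ?_, ?_, ?_⟩
  · intro G hG
    rw [hmem G hG]
    exact ht2
  · intro G hG
    rw [hmem G hG]
  · intro P hP hnb
    exact mem_restr_grd hP (ht1.nonempty_mem hP)
  · intro G hG
    rw [hmem G hG]
    intro P hP hnb
    exact mem_restr_grd hP (ht2.nonempty_mem hP)
  · exact List.pairwise_singleton _ _
  · intro G hG
    rw [hmem G hG]
    right
    intro B hB
    rcases (aug_block_iff hρ h2).1 hB with h | h
    · exact (aug_block_iff hρ h1).2 (Or.inl h)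
    · exact (aug_block_iff hρ h1).2 (Or.inr h)
  · intro A X1 X2 b h
    exact absurd h (by simp [initSt])
  · intro A X1 X2 h
    exact absurd h (by simp [initSt])

lemma remapBot_eq {M : MapT β} {A A' : Finset β} (hne : A' ≠ A) :
    remapBot M A A' = M A' := by
  simp only [remapBot, if_neg hne]

lemma remapBot_self {M : MapT β} {A : Finset β} :
    remapBot M A A = (M A).map (fun p => (p.1, p.2.1, false)) := by
  simp [remapBot]

lemma map_entry {M : MapT β} {A : Finset β} {X1 X2 : Finset β} {b : Bool}
    (h : (M A).map (fun p => (p.1, p.2.1, false)) = some (X1, X2, b)) :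
    ∃ b', M A = some (X1, X2, b') ∧ b = false := by
  rcases Option.map_eq_some_iff.1 h with ⟨p, hp, hfp⟩
  obtain ⟨p1, p2, p3⟩ := p
  simp only [Prod.mk.injEq] at hfp
  obtain ⟨rfl, rfl, rfl⟩ := hfp
  exact ⟨p3, hp, rfl⟩

lemma inv_isol {s t : St β} (hU2 : grd U2 ∈ U2)
    (hs : Inv U1 U2 s) (hns : ¬ SingleLeaf s.1) {A : Finset β}
    (h : IsolApply s A t) : Inv U1 U2 t := by
  obtain ⟨⟨hAblock, hAmem⟩, rfl⟩ := h
  have hns' : s.1 ≠ {A} := fun he => hns ⟨A, he⟩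
  have hY : (grd s.1 \ A).Nonempty := sdiff_block_nonempty hs.treeR hAblock hns'
  have hio : BlocksIO s.1 (grd s.1 \ A) := blocksIO_sdiff_block hs.treeR hAblock
  have hYg : grd s.1 \ A ⊆ grd s.1 := Finset.sdiff_subset
  have htree : IsTree (rmBlock s.1 A) := restr_tree hs.treeR hYg hY hio
  have hgrd : grd (rmBlock s.1 A) = grd s.1 \ A := grd_restr hs.treeR hYg hY
  have hAsub : A ⊆ grd U2 := by
    have := hs.grdF _ hAmem
    rwa [grd_singleton] at this
  have hAne : A.Nonempty := hs.treeR.nonempty_mem hAblock.1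
  refine ⟨htree, hs.treesF, ?_, hs.grdF, ?_, hs.intF, hs.disj, ?_, ?_, ?_⟩
  · rw [hgrd]
    exact hYg.trans hs.grdR
  · intro P hP hnb
    rw [hgrd]
    exact intF_piece hs.treeR hYg hio hs.intR P hP hnb
  · intro G hG
    by_cases hGA : G = {A}
    · exact Or.inl ⟨A, hGA⟩
    rcases hs.blocksR G hG with hsing | hbl
    · exact Or.inl hsing
    · right
      intro B hB
      have hRB := hbl B hB
      have hBA : B ≠ A := by
        rintro rfl
        have hdisj : Disjoint (grd G) (grd ({B} : Clus β)) := by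
          apply (haveI : Std.Symm (fun G H : Clus β => Disjoint (grd G) (grd H)) := ⟨fun _ _ h => h.symm⟩; List.Pairwise.forall hs.disj hG hAmem)
          intro he
          exact hGA he
        rw [grd_singleton] at hdisj
        obtain ⟨x, hx⟩ := hAne
        exact Finset.disjoint_left.1 hdisj (subset_grd hB.1 hx) hx
      have hBY : B ⊆ grd s.1 \ A := by
        intro x hx
        exact Finset.mem_sdiff.2 ⟨subset_grd hRB.1 hx, fun hxA =>
          Finset.disjoint_left.1 (hs.treeR.blocks_disjoint hRB hAblock hBA) hx hxA⟩
      exact (restr_block_iff hs.treeR hio).2 ⟨hRB, hBY⟩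
  · intro A' X1 X2 b h'
    have h'' : remapBot s.2.2 A A' = some (X1, X2, b) := h'
    by_cases hA' : A' = A
    · subst hA'
      rw [remapBot_self] at h''
      obtain ⟨b', hb', -⟩ := map_entry h''
      exact hs.mwf A' X1 X2 b' hb'
    · rw [remapBot_eq hA'] at h''
      exact hs.mwf A' X1 X2 b h''
  · intro A' X1 X2 h'
    have h'' : remapBot s.2.2 A A' = some (X1, X2, false) := h'
    by_cases hA' : A' = A
    · subst hA'
      refine ⟨{A'}, hAmem, A', isBlock_singleton, Finset.Subset.refl _, Or.inr ?_⟩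
      rw [grd_singleton]
      exact root_restr hU2 hAsub hAne
    · rw [remapBot_eq hA'] at h''
      exact hs.mfalse A' X1 X2 h''

end Preserve

section Preserve2
variable {β : Type} [DecidableEq β] {U1 U2 : Clus β}

lemma replace_mem_cases' {F F' : List (Clus β)} {G : Clus β} {new : List (Clus β)}
    (h : ReplaceIn F F' G new) (hdisj : F.Pairwise (fun G H => Disjoint (grd G) (grd H)))
    (hne : (grd G).Nonempty) {H : Clus β} (hH : H ∈ F') :
    H ∈ new ∨ (H ∈ F ∧ H ≠ G) := by
  have hGne : ∀ K, Disjoint (grd K) (grd G) → K ≠ G := by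
    intro K hd he
    subst he
    obtain ⟨x, hx⟩ := hne
    exact Finset.disjoint_left.1 hd hx hx
  obtain ⟨l1, l2, rfl, rfl⟩ := h
  rcases List.mem_append.1 hH with h1 | h1
  · rcases List.mem_append.1 h1 with h2 | h2
    · rw [List.pairwise_append] at hdisj
      refine Or.inr ⟨List.mem_append_left _ h2, hGne H ?_⟩
      exact hdisj.2.2 H h2 G (List.mem_cons_self)
    · exact Or.inl h2
  · rw [List.pairwise_append] at hdisj
    have := (List.pairwise_cons.1 hdisj.2.1).1 H h1
    exact Or.inr ⟨List.mem_append_right _ (List.mem_cons_of_mem _ h1),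
      hGne H this.symm⟩

lemma inv_con {s t : St β} (hs : Inv U1 U2 s) {A C : Finset β}
    (h : ConApply s A C t) : Inv U1 U2 t := by
  obtain ⟨⟨hchR, -⟩, G, F', hG, hchG, hrep, PR, PG, hPRA, hPGA, b, hb, rfl⟩ := h
  obtain ⟨hne, P, hPA, hPC, hall⟩ := hchR
  have hRA : IsBlock s.1 A := hall A hPA
  have hRC : IsBlock s.1 C := hall C hPC
  obtain ⟨-, hGA, hGC, PG', hPG'A, hPG'C⟩ := hchG
  have hTG : IsTree G := hs.treesF G hG
  have hTR : IsTree s.1 := hs.treeR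
  have hPGeq : PG' = PG := hTG.parent_unique hPG'A hPGA
  have hPGC : IsChild G C PG := hPGeq ▸ hPG'C
  have hPReq : P = PR := hTR.parent_unique hPA hPRA
  have hPRC : IsChild s.1 C PR := hPReq ▸ hPC
  have hGns : ¬ ∃ D, G = {D} := by
    rintro ⟨D, rfl⟩
    exact hne ((Finset.mem_singleton.1 hGA.1).trans (Finset.mem_singleton.1 hGC.1).symm)
  have hblG : ∀ B, IsBlock G B → IsBlock s.1 B := (hs.blocksR G hG).resolve_left hGns
  have hgsub : grd G ⊆ grd s.1 := grd_sub_of_blocks hTG hblG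
  have hTR' : IsTree (conCh s.1 A C) := conCh_tree hTR hRA hRC hne hPA hPC
  have hTG' : IsTree (conCh G A C) := conCh_tree hTG hGA hGC hne hPGA hPGC
  have hgG : grd (conCh G A C) = grd G := grd_conCh hGA hGC
  have hgR : grd (conCh s.1 A C) = grd s.1 := grd_conCh hRA hRC
  have hGgrdne : (grd G).Nonempty := hTG.nonempty_mem hTG.grd_mem
  have hnewmem : conCh G A C ∈ F' := replace_mem_new hrep (List.mem_singleton_self _)
  refine ⟨hTR', ?_, ?_, ?_, ?_, ?_, ?_, ?_, ?_, ?_⟩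
  · refine replace_forall hrep hs.treesF ?_
    intro H hH
    rw [List.mem_singleton.1 hH]
    exact hTG'
  · rw [hgR]
    exact hs.grdR
  · refine replace_forall hrep hs.grdF ?_
    intro H hH
    rw [List.mem_singleton.1 hH, hgG]
    exact hs.grdF G hG
  · intro Q hQ hnb
    obtain ⟨hQR, hQnb⟩ := conCh_internal hTR hRA hRC hne hPA hPC hQ hnb
    rw [hgR]
    exact hs.intR Q hQR hQnb
  · intro H hH
    rcases replace_mem_cases hrep hH with h1 | h1
    · rw [List.mem_singleton.1 h1]
      intro Q hQ hnb
      obtain ⟨hQG, hQnb⟩ := conCh_internal hTG hGA hGC hne hPGA hPGC hQ hnb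
      rw [hgG]
      exact hs.intF G hG Q hQG hQnb
    · exact hs.intF H h1
  · refine replace_pairwise_disjoint hrep hs.disj (List.pairwise_singleton _ _) ?_
    intro H hH
    rw [List.mem_singleton.1 hH, hgG]
  · intro H hH
    rcases replace_mem_cases' hrep hs.disj hGgrdne hH with h1 | ⟨h1, hHG⟩
    · rw [List.mem_singleton.1 h1]
      right
      intro B hB
      rcases (conCh_block_iff hTG hGA hGC hne hPGA hPGC).1 hB with rfl | ⟨hBG, hBA, hBC⟩
      · exact conCh_block_union hTR hRA hRC hPA hPC
      · exact (conCh_block_iff hTR hRA hRC hne hPA hPC).2 (Or.inr ⟨hblG B hBG, hBA, hBC⟩)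
    · rcases hs.blocksR H h1 with hsing | hbl
      · exact Or.inl hsing
      · right
        intro B hB
        have hdisj : Disjoint (grd H) (grd G) :=
          (haveI : Std.Symm (fun G H : Clus β => Disjoint (grd G) (grd H)) := ⟨fun _ _ h => h.symm⟩; List.Pairwise.forall hs.disj h1 hG hHG)
        have hBA : B ≠ A := by
          rintro rfl
          obtain ⟨x, hx⟩ := hTG.nonempty_mem hGA.1
          exact Finset.disjoint_left.1 hdisj (subset_grd (hB.1)
            (by exact hx : x ∈ B)) (subset_grd hGA.1 hx)
        have hBC : B ≠ C := by
          rintro rfl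
          obtain ⟨x, hx⟩ := hTG.nonempty_mem hGC.1
          exact Finset.disjoint_left.1 hdisj (subset_grd (hB.1)
            (by exact hx : x ∈ B)) (subset_grd hGC.1 hx)
        exact (conCh_block_iff hTR hRA hRC hne hPA hPC).2 (Or.inr ⟨hbl B hB, hBA, hBC⟩)
  · intro A' X1 X2 b' h'
    have h'' : Function.update s.2.2 (A ∪ C) (some (A, C, b)) A' = some (X1, X2, b') := h'
    by_cases hA' : A' = A ∪ C
    · subst hA'
      rw [Function.update_self] at h''
      obtain ⟨rfl, rfl, rfl⟩ := Prod.mk.injEq .. ▸ (Option.some.inj h'')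
      exact ⟨rfl, Finset.disjoint_iff_inter_eq_empty.1 (hTG.blocks_disjoint hGA hGC hne),
        hTG.nonempty_mem hGA.1, hTG.nonempty_mem hGC.1⟩
    · rw [Function.update_of_ne hA'] at h''
      exact hs.mwf A' X1 X2 b' h''
  · intro A' X1 X2 h'
    have h'' : Function.update s.2.2 (A ∪ C) (some (A, C, b)) A' = some (X1, X2, false) := h'
    by_cases hA' : A' = A ∪ C
    · subst hA'
      rw [Function.update_self] at h''
      have hbf : b = false := by
        have := Option.some.inj h''
        rw [Prod.mk.injEq, Prod.mk.injEq] at this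
        exact this.2.2
      have hnd : ¬ (Deg3 s.1 PR ∧ Deg3 G PG) := by
        intro hd
        rw [← hb] at hd
        rw [hbf] at hd
        exact Bool.false_ne_true hd
      refine ⟨conCh G A C, hnewmem, A ∪ C,
        conCh_block_union hTG hGA hGC hPGA hPGC, Finset.Subset.refl _, ?_⟩
      by_cases hdG : Deg3 G PG
      · have hdR : ¬ Deg3 s.1 PR := fun hd => hnd ⟨hd, hdG⟩
        have hPRu : PR = A ∪ C := hTR.parent_eq_union hPRA hPRC hne hdR
        have hPRnb : ¬ IsBlock s.1 PR := by
          intro hbk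
          exact (ne_of_lt hPRA.2.2.1) (hbk.2 A hRA.1 hPRA.2.2.1.1)
        have hres : PR ∈ restr U1 (grd s.1) := hs.intR PR hPRA.2.1 hPRnb
        left
        rw [hgG]
        rw [hPRu] at hres
        exact restr_mono_ground hres
          (Finset.union_subset (subset_grd hGA.1) (subset_grd hGC.1)) hgsub
      · have hPGu : PG = A ∪ C := hTG.parent_eq_union hPGA hPGC hne hdG
        have hPGnb : ¬ IsBlock G PG := by
          intro hbk
          exact (ne_of_lt hPGA.2.2.1) (hbk.2 A hGA.1 hPGA.2.2.1.1)
        have hres : PG ∈ restr U2 (grd G) := hs.intF G hG PG hPGA.2.1 hPGnb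
        right
        rw [hgG]
        rw [hPGu] at hres
        exact hres
    · rw [Function.update_of_ne hA'] at h''
      obtain ⟨G0, hG0, B, hBb, hsubB, hres⟩ := hs.mfalse A' X1 X2 h''
      rcases replace_witness hrep hG0 with rfl | hG0'
      · by_cases hBA : B = A
        · subst hBA
          exact ⟨conCh G0 B C, hnewmem, B ∪ C,
            conCh_block_union hTG hGA hGC hPGA hPGC,
            hsubB.trans Finset.subset_union_left, by rw [hgG]; exact hres⟩
        by_cases hBC : B = C
        · subst hBC
          exact ⟨conCh G0 A B, hnewmem, A ∪ B,
            conCh_block_union hTG hGA hGC hPGA hPGC,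
            hsubB.trans Finset.subset_union_right, by rw [hgG]; exact hres⟩
        · exact ⟨conCh G0 A C, hnewmem, B,
            (conCh_block_iff hTG hGA hGC hne hPGA hPGC).2 (Or.inr ⟨hBb, hBA, hBC⟩),
            hsubB, by rw [hgG]; exact hres⟩
      · exact ⟨G0, hG0', B, hBb, hsubB, hres⟩

end Preserve2

section Preserve3
variable {β : Type} [DecidableEq β] {U1 U2 : Clus β}

lemma restr_or_mono {A' Yb Z : Finset β} (h : A' ∈ restr U1 Yb ∨ A' ∈ restr U2 Yb)
    (h1 : A' ⊆ Z) (h2 : Z ⊆ Yb) : A' ∈ restr U1 Z ∨ A' ∈ restr U2 Z :=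
  h.imp (fun hh => restr_mono_ground hh h1 h2) (fun hh => restr_mono_ground hh h1 h2)

lemma inv_cut {s t : St β} (hs : Inv U1 U2 s)
    (hguard : ¬ ∃ A, IsolRef s.1 s.2.1 A) {A C : Finset β}
    (h : CutApply s A C t) : Inv U1 U2 t := by
  obtain ⟨⟨hchR, -⟩, G, F', M', hG, hGA, hrep, hcut, rfl⟩ := h
  obtain ⟨hne, P0, hP0A, hP0C, hall0⟩ := hchR
  have hRA : IsBlock s.1 A := hall0 A hP0A
  have hTG : IsTree G := hs.treesF G hG
  have hGnsA : G ≠ {A} := by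
    rintro rfl
    exact hguard ⟨A, hRA, hG⟩
  have hY : (grd G \ A).Nonempty := sdiff_block_nonempty hTG hGA hGnsA
  have hio : BlocksIO G (grd G \ A) := blocksIO_sdiff_block hTG hGA
  have hYg : grd G \ A ⊆ grd G := Finset.sdiff_subset
  have hAne : A.Nonempty := hTG.nonempty_mem hGA.1
  have hAsubG : A ⊆ grd G := subset_grd hGA.1
  have htreeY : IsTree (restr G (grd G \ A)) := restr_tree hTG hYg hY hio
  have hgY : grd (restr G (grd G \ A)) = grd G \ A := grd_restr hTG hYg hY
  have hGns : ¬ ∃ D, G = {D} := by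
    rintro ⟨D, rfl⟩
    exact hGnsA (by rw [Finset.mem_singleton.1 hGA.1])
  have hblG : ∀ B, IsBlock G B → IsBlock s.1 B := (hs.blocksR G hG).resolve_left hGns
  have hmemA : ({A} : Clus β) ∈ F' := replace_mem_new hrep (List.mem_cons_self)
  have hmemY : restr G (grd G \ A) ∈ F' :=
    replace_mem_new hrep (List.mem_cons_of_mem _ (List.mem_singleton_self _))
  have hsurg : ∀ A' X1 X2, s.2.2 A' = some (X1, X2, false) →
      ∃ G0 ∈ F', ∃ B, IsBlock G0 B ∧ A' ⊆ B ∧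
        (A' ∈ restr U1 (grd G0) ∨ A' ∈ restr U2 (grd G0)) := by
    intro A' X1 X2 h'
    obtain ⟨G0, hG0, B, hBb, hsubB, hres⟩ := hs.mfalse A' X1 X2 h'
    rcases replace_witness hrep hG0 with rfl | hmem
    · by_cases hBA : B = A
      · subst hBA
        refine ⟨{B}, hmemA, B, isBlock_singleton, hsubB, ?_⟩
        rw [grd_singleton]
        exact restr_or_mono hres hsubB (subset_grd hBb.1)
      · have hBY : B ⊆ grd G0 \ A := by
          intro x hx
          exact Finset.mem_sdiff.2 ⟨subset_grd hBb.1 hx, fun hxA =>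
            Finset.disjoint_left.1 (hTG.blocks_disjoint hBb hGA hBA) hx hxA⟩
        refine ⟨restr G0 (grd G0 \ A), hmemY, B, (restr_block_iff hTG hio).2 ⟨hBb, hBY⟩,
          hsubB, ?_⟩
        rw [hgY]
        exact restr_or_mono hres (hsubB.trans hBY) hYg
    · exact ⟨G0, hmem, B, hBb, hsubB, hres⟩
  refine ⟨hs.treeR, ?_, hs.grdR, ?_, hs.intR, ?_, ?_, ?_, ?_, ?_⟩
  · refine replace_forall hrep hs.treesF ?_
    intro H hH
    rcases List.mem_cons.1 hH with rfl | hH2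
    · exact singleton_tree hAne
    · rw [List.mem_singleton.1 hH2]
      exact htreeY
  · refine replace_forall hrep hs.grdF ?_
    intro H hH
    rcases List.mem_cons.1 hH with rfl | hH2
    · rw [grd_singleton]
      exact hAsubG.trans (hs.grdF G hG)
    · rw [List.mem_singleton.1 hH2, hgY]
      exact hYg.trans (hs.grdF G hG)
  · intro H hH
    rcases replace_mem_cases hrep hH with h1 | h1
    · rcases List.mem_cons.1 h1 with rfl | h2
      · intro Q hQ hnb
        rw [Finset.mem_singleton.1 hQ] at hnb
        exact absurd isBlock_singleton hnb
      · rw [List.mem_singleton.1 h2]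
        intro Q hQ hnb
        rw [hgY]
        exact intF_piece hTG hYg hio (hs.intF G hG) Q hQ hnb
    · exact hs.intF H h1
  · refine replace_pairwise_disjoint hrep hs.disj ?_ ?_
    · refine List.pairwise_cons.2 ⟨?_, List.pairwise_singleton _ _⟩
      intro H hH
      rw [List.mem_singleton.1 hH, grd_singleton, hgY]
      exact Finset.disjoint_sdiff
    · intro H hH
      rcases List.mem_cons.1 hH with rfl | h2
      · rw [grd_singleton]
        exact hAsubG
      · rw [List.mem_singleton.1 h2, hgY]
        exact hYg
  · intro H hH
    rcases replace_mem_cases hrep hH with h1 | h1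
    · rcases List.mem_cons.1 h1 with rfl | h2
      · exact Or.inl ⟨A, rfl⟩
      · rw [List.mem_singleton.1 h2]
        right
        intro B hB
        obtain ⟨hBG, -⟩ := (restr_block_iff hTG hio).1 hB
        exact hblG B hBG
    · exact hs.blocksR H h1
  · intro A' X1 X2 b h'
    rcases hcut with ⟨P, D, hchA, hchD, hDA, hallc, hDb, rfl⟩ | ⟨-, rfl⟩
    · have h'' : remapBot s.2.2 D A' = some (X1, X2, b) := h'
      by_cases hA' : A' = D
      · subst hA'
        rw [remapBot_self] at h''
        obtain ⟨b', hb', -⟩ := map_entry h''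
        exact hs.mwf A' X1 X2 b' hb'
      · rw [remapBot_eq hA'] at h''
        exact hs.mwf A' X1 X2 b h''
    · exact hs.mwf A' X1 X2 b h'
  · intro A' X1 X2 h'
    rcases hcut with ⟨P, D, hchA, hchD, hDA, hallc, hDb, rfl⟩ | ⟨-, rfl⟩
    · have h'' : remapBot s.2.2 D A' = some (X1, X2, false) := h'
      by_cases hA' : A' = D
      · subst hA'
        have hDY : A' ⊆ grd G \ A := by
          intro x hx
          exact Finset.mem_sdiff.2 ⟨subset_grd hDb.1 hx, fun hxA =>
            Finset.disjoint_left.1 (hTG.blocks_disjoint hDb hGA hDA) hx hxA⟩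
        have hinter : P ∩ (grd G \ A) = A' := child_inter_sdiff hTG hchA hchD hDA hallc
        have hPnb : ¬ IsBlock G P := by
          intro hbk
          exact (ne_of_lt hchA.2.2.1) (hbk.2 A hGA.1 hchA.2.2.1.1)
        have hres : P ∈ restr U2 (grd G) := hs.intF G hG P hchA.2.1 hPnb
        have hDne : A'.Nonempty := hTG.nonempty_mem hDb.1
        refine ⟨restr G (grd G \ A), hmemY, A',
          (restr_block_iff hTG hio).2 ⟨hDb, hDY⟩, Finset.Subset.refl _, Or.inr ?_⟩
        rw [hgY]
        have := restr_inter_mem hres hYg (by rw [hinter]; exact hDne.ne_empty)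
        rwa [hinter] at this
      · rw [remapBot_eq hA'] at h''
        exact hsurg A' X1 X2 h''
    · exact hsurg A' X1 X2 h'

end Preserve3

section Preserve4
variable {β : Type} [DecidableEq β] {U1 U2 : Clus β}

lemma remapIf_pos {M : MapT β} {c : Prop} {A A' : Finset β} (h : A' = A ∧ c) :
    remapIf c A M A' = (M A').map (fun p => (p.1, p.2.1, false)) := by
  simp only [remapIf, if_pos h]

lemma remapIf_neg {M : MapT β} {c : Prop} {A A' : Finset β} (h : ¬ (A' = A ∧ c)) :
    remapIf c A M A' = M A' := by
  simp only [remapIf, if_neg h]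

lemma inv_pend {s t : St β} (hs : Inv U1 U2 s) {A C : Finset β}
    (h : PendApply s A C t) : Inv U1 U2 t := by
  obtain ⟨⟨hchR, -⟩, G, new, F', M', hG, hGA, hGC, hcp, hrep, hupd, rfl⟩ := h
  obtain ⟨L, hL, pend, hpendmem, hpendcomp, hpendnd, rfl⟩ := hcp
  obtain ⟨PA, PC, L', hPA, hPC, hL', hM'⟩ := hupd
  have hTG : IsTree G := hs.treesF G hG
  have hne : A ≠ C := hchR.1
  have hLeq : L' = L := lca_unique hL' hL
  rw [hLeq] at hM'
  subst hM'
  have hY1g : grd G \ (L \ (A ∪ C)) ⊆ grd G := Finset.sdiff_subset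
  have hAY1 : A ⊆ grd G \ (L \ (A ∪ C)) := A_sub_acground hTG hGA hGC hne hL
  have hCY1 : C ⊆ grd G \ (L \ (A ∪ C)) := C_sub_acground hTG hGA hGC hne hL
  have hY1ne : (grd G \ (L \ (A ∪ C))).Nonempty :=
    (hTG.nonempty_mem hGA.1).mono hAY1
  have hio1 : BlocksIO G (grd G \ (L \ (A ∪ C))) := blocksIO_acground hTG hGA hGC hne hL
  have hacr : acComp G A C L = restr G (grd G \ (L \ (A ∪ C))) := acComp_eq_restr
  have htree1 : IsTree (acComp G A C L) := hacr ▸ restr_tree hTG hY1g hY1ne hio1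
  have hg1 : grd (acComp G A C L) = grd G \ (L \ (A ∪ C)) := by
    rw [hacr]
    exact grd_restr hTG hY1g hY1ne
  have hGns : ¬ ∃ D, G = {D} := by
    rintro ⟨D, rfl⟩
    exact hne ((Finset.mem_singleton.1 hGA.1).trans (Finset.mem_singleton.1 hGC.1).symm)
  have hblG : ∀ B, IsBlock G B → IsBlock s.1 B := (hs.blocksR G hG).resolve_left hGns
  have hmem1 : acComp G A C L ∈ F' := replace_mem_new hrep (List.mem_cons_self)
  have hpend_eq : ∀ Q ∈ pend, ∃ D P, PendGround G A C D P ∧ P.Nonempty ∧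
      Q = restr G P ∧ P ⊆ grd G := by
    intro Q hQ
    obtain ⟨D, P, hPG, hPne, rfl⟩ := hpendmem Q hQ
    exact ⟨D, P, hPG, hPne, pendComp_eq_restr hTG hGA hGC hne hL hPG hPne,
      (pendGround_subset_D hTG hGA hGC hne hL hPG).trans (subset_grd hPG.1.1)⟩
  have hsurg : ∀ A' X1 X2, s.2.2 A' = some (X1, X2, false) →
      ∃ G0 ∈ F', ∃ B, IsBlock G0 B ∧ A' ⊆ B ∧
        (A' ∈ restr U1 (grd G0) ∨ A' ∈ restr U2 (grd G0)) := by
    intro A' X1 X2 h'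
    obtain ⟨G0, hG0, B, hBb, hsubB, hres⟩ := hs.mfalse A' X1 X2 h'
    rcases replace_witness hrep hG0 with rfl | hmem
    · rcases block_trichotomy hTG hGA hGC hne hL hBb with hBS | hBS
      · obtain ⟨D, P, hPG, hBP⟩ := block_pend_cover hTG hGA hGC hne hL hBb hBS
        have hPne : P.Nonempty := (hTG.nonempty_mem hBb.1).mono hBP
        have hQmem : pendComp G0 P ∈ F' :=
          replace_mem_new hrep (List.mem_cons_of_mem _ (hpendcomp D P hPG hPne))
        have hQr : pendComp G0 P = restr G0 P :=
          pendComp_eq_restr hTG hGA hGC hne hL hPG hPne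
        have hPsub : P ⊆ grd G0 :=
          (pendGround_subset_D hTG hGA hGC hne hL hPG).trans (subset_grd hPG.1.1)
        have hioP : BlocksIO G0 P := pend_blocksIO hTG hGA hGC hne hL hPG
        refine ⟨pendComp G0 P, hQmem, B, ?_, hsubB, ?_⟩
        · rw [hQr]
          exact (restr_block_iff hTG hioP).2 ⟨hBb, hBP⟩
        · rw [hQr, grd_restr hTG hPsub hPne]
          exact restr_or_mono hres (hsubB.trans hBP) hPsub
      · have hBY1 : B ⊆ grd G0 \ (L \ (A ∪ C)) := by
          intro x hx
          exact Finset.mem_sdiff.2 ⟨subset_grd hBb.1 hx, fun hxS =>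
            absurd hBS (Finset.nonempty_iff_ne_empty.1 ⟨x, Finset.mem_inter.2 ⟨hx, hxS⟩⟩)⟩
        refine ⟨acComp G0 A C L, hmem1, B, ?_, hsubB, ?_⟩
        · rw [hacr]
          exact (restr_block_iff hTG hio1).2 ⟨hBb, hBY1⟩
        · rw [hg1]
          exact restr_or_mono hres (hsubB.trans hBY1) hY1g
    · exact ⟨G0, hmem, B, hBb, hsubB, hres⟩
  refine ⟨hs.treeR, ?_, hs.grdR, ?_, hs.intR, ?_, ?_, ?_, ?_, ?_⟩
  · refine replace_forall hrep hs.treesF ?_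
    intro H hH
    rcases List.mem_cons.1 hH with rfl | hH2
    · exact htree1
    · obtain ⟨D, P, hPG, hPne, rfl, hPsub⟩ := hpend_eq H hH2
      exact restr_tree hTG hPsub hPne (pend_blocksIO hTG hGA hGC hne hL hPG)
  · refine replace_forall hrep hs.grdF ?_
    intro H hH
    rcases List.mem_cons.1 hH with rfl | hH2
    · rw [hg1]
      exact hY1g.trans (hs.grdF G hG)
    · obtain ⟨D, P, hPG, hPne, rfl, hPsub⟩ := hpend_eq H hH2
      rw [grd_restr hTG hPsub hPne]
      exact hPsub.trans (hs.grdF G hG)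
  · intro H hH
    rcases replace_mem_cases hrep hH with h1 | h1
    · rcases List.mem_cons.1 h1 with rfl | hH2
      · intro Q hQ hnb
        rw [hg1]
        rw [hacr] at hQ hnb
        exact intF_piece hTG hY1g hio1 (hs.intF G hG) Q hQ hnb
      · obtain ⟨D, P, hPG, hPne, rfl, hPsub⟩ := hpend_eq H hH2
        intro Q hQ hnb
        rw [grd_restr hTG hPsub hPne]
        exact intF_piece hTG hPsub (pend_blocksIO hTG hGA hGC hne hL hPG)
          (hs.intF G hG) Q hQ hnb
    · exact hs.intF H h1
  · refine replace_pairwise_disjoint hrep hs.disj ?_ ?_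
    · refine List.pairwise_cons.2 ⟨?_, ?_⟩
      · intro Q hQ
        obtain ⟨D, P, hPG, hPne, rfl, hPsub⟩ := hpend_eq Q hQ
        rw [hg1, grd_restr hTG hPsub hPne]
        rw [Finset.disjoint_left]
        intro x hx hxP
        exact (Finset.mem_sdiff.1 hx).2
          (pendGround_subset hTG hGA hGC hne hL hTG hPG hxP)
      · refine List.Pairwise.imp_of_mem ?_ hpendnd
        intro Q1 Q2 hQ1 hQ2 hne12
        obtain ⟨D1, P1, hPG1, hPne1, rfl, hPsub1⟩ := hpend_eq Q1 hQ1
        obtain ⟨D2, P2, hPG2, hPne2, rfl, hPsub2⟩ := hpend_eq Q2 hQ2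
        rw [grd_restr hTG hPsub1 hPne1, grd_restr hTG hPsub2 hPne2]
        rw [Finset.disjoint_iff_inter_eq_empty]
        by_contra hc
        have := pendGround_disjoint hTG hGA hGC hne hL hPG1 hPG2
          (Finset.nonempty_iff_ne_empty.2 hc)
        subst this
        exact hne12 rfl
    · intro H hH
      rcases List.mem_cons.1 hH with rfl | hH2
      · rw [hg1]
        exact hY1g
      · obtain ⟨D, P, hPG, hPne, rfl, hPsub⟩ := hpend_eq H hH2
        rw [grd_restr hTG hPsub hPne]
        exact hPsub
  · intro H hH
    rcases replace_mem_cases hrep hH with h1 | h1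
    · right
      intro B hB
      rcases List.mem_cons.1 h1 with rfl | hH2
      · rw [hacr] at hB
        exact hblG B ((restr_block_iff hTG hio1).1 hB).1
      · obtain ⟨D, P, hPG, hPne, heq, hPsub⟩ := hpend_eq H hH2
        subst heq
        exact hblG B ((restr_block_iff hTG (pend_blocksIO hTG hGA hGC hne hL hPG)).1 hB).1
    · exact hs.blocksR H h1
  · intro A' X1 X2 b h'
    have h'' : remapIf (PA ≠ L) A (remapIf (PC ≠ L) C s.2.2) A' = some (X1, X2, b) := h'
    by_cases h1 : A' = A ∧ PA ≠ L
    · rw [remapIf_pos h1] at h''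
      obtain ⟨b', hb', -⟩ := map_entry h''
      by_cases h2 : A' = C ∧ PC ≠ L
      · rw [remapIf_pos h2] at hb'
        obtain ⟨b'', hb'', -⟩ := map_entry hb'
        exact hs.mwf A' X1 X2 b'' hb''
      · rw [remapIf_neg h2] at hb'
        exact hs.mwf A' X1 X2 b' hb'
    · rw [remapIf_neg h1] at h''
      by_cases h2 : A' = C ∧ PC ≠ L
      · rw [remapIf_pos h2] at h''
        obtain ⟨b', hb', -⟩ := map_entry h''
        exact hs.mwf A' X1 X2 b' hb'
      · rw [remapIf_neg h2] at h''
        exact hs.mwf A' X1 X2 b h''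
  · intro A' X1 X2 h'
    have h'' : remapIf (PA ≠ L) A (remapIf (PC ≠ L) C s.2.2) A' = some (X1, X2, false) := h'
    by_cases h1 : A' = A ∧ PA ≠ L
    · obtain ⟨rfl, hPAne⟩ := h1
      refine ⟨acComp G A' C L, hmem1, A', ?_, Finset.Subset.refl _, Or.inr ?_⟩
      · rw [hacr]
        exact (restr_block_iff hTG hio1).2 ⟨hGA, hAY1⟩
      · rw [hg1]
        have hinter : PA ∩ (grd G \ (L \ (A' ∪ C))) = A' :=
          parentA_inter hTG hGA hGC hne hL hPA hPAne
        have hPAnb : ¬ IsBlock G PA := fun hbk =>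
          (ne_of_lt hPA.2.2.1) (hbk.2 A' hGA.1 hPA.2.2.1.1)
        have hres : PA ∈ restr U2 (grd G) := hs.intF G hG PA hPA.2.1 hPAnb
        have hmem' := restr_inter_mem hres hY1g
          (by rw [hinter]; exact (hTG.nonempty_mem hGA.1).ne_empty)
        rwa [hinter] at hmem'
    · rw [remapIf_neg h1] at h''
      by_cases h2 : A' = C ∧ PC ≠ L
      · obtain ⟨rfl, hPCne⟩ := h2
        refine ⟨acComp G A A' L, hmem1, A', ?_, Finset.Subset.refl _, Or.inr ?_⟩
        · rw [hacr]
          exact (restr_block_iff hTG hio1).2 ⟨hGC, hCY1⟩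
        · rw [hg1]
          have hL2 : IsLca G (A' ∪ A) L := by
            rw [Finset.union_comm A' A]
            exact hL
          have hinter : PC ∩ (grd G \ (L \ (A' ∪ A))) = A' :=
            parentA_inter hTG hGC hGA (Ne.symm hne) hL2 hPC hPCne
          rw [Finset.union_comm A' A] at hinter
          have hPCnb : ¬ IsBlock G PC := fun hbk =>
            (ne_of_lt hPC.2.2.1) (hbk.2 A' hGC.1 hPC.2.2.1.1)
          have hres : PC ∈ restr U2 (grd G) := hs.intF G hG PC hPC.2.1 hPCnb
          have hmem' := restr_inter_mem hres hY1g
            (by rw [hinter]; exact (hTG.nonempty_mem hGC.1).ne_empty)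
          rwa [hinter] at hmem'
      · rw [remapIf_neg h2] at h''
        exact hsurg A' X1 X2 h''

end Preserve4

section Expand
variable {β : Type} [DecidableEq β] {U1 U2 : Clus β}

structure EInv (U1 U2 : Clus β) (M : MapT β) (F : List (Clus β)) : Prop where
  nonempty : ∀ G ∈ F, ∀ C ∈ G, C ≠ ∅
  lam : ∀ G ∈ F, ∀ C ∈ G, ∀ D ∈ G, C ⊆ D ∨ D ⊆ C ∨ C ∩ D = ∅
  nb : ∀ G ∈ F, ∀ C ∈ G, ¬ IsBlock G C → ∃ X1 X2, M C = some (X1, X2, false)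
  cover : ∀ G ∈ F, ∀ C ∈ G, ¬ IsBlock G C → C ⊆ grd (G.erase C)
  disj : F.Pairwise (fun G H => Disjoint (grd G) (grd H))
  mf : ∀ A X1 X2, M A = some (X1, X2, false) →
    ∃ G ∈ F, A ⊆ grd G ∧ (A ∈ restr U1 (grd G) ∨ A ∈ restr U2 (grd G))

lemma terminal_singletons {s : St β} (hs : Inv U1 U2 s) (hsl : SingleLeaf s.1) :
    ∀ G ∈ s.2.1, ∃ B, G = ({B} : Clus β) := by
  intro G hG
  rcases hs.blocksR G hG with h | hbl
  · exact h
  obtain ⟨A0, hA0⟩ := hsl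
  have hTG := hs.treesF G hG
  by_cases hc : 2 ≤ G.card
  · exfalso
    obtain ⟨B1, B2, h1, h2, hne12⟩ := hTG.two_blocks hc
    have e1 : B1 = A0 := by
      have := (hbl B1 h1).1
      rw [hA0] at this
      exact Finset.mem_singleton.1 this
    have e2 : B2 = A0 := by
      have := (hbl B2 h2).1
      rw [hA0] at this
      exact Finset.mem_singleton.1 this
    exact hne12 (e1.trans e2.symm)
  · have h1 : G.card = 1 := by
      have : 1 ≤ G.card := Finset.card_pos.2 hTG.1
      omega
    exact Finset.card_eq_one.1 h1

lemma einv_of_terminal {s : St β} (hs : Inv U1 U2 s) (hsl : SingleLeaf s.1) :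
    EInv U1 U2 s.2.2 s.2.1 := by
  have hsing := terminal_singletons hs hsl
  refine ⟨?_, ?_, ?_, ?_, hs.disj, ?_⟩
  · intro G hG C hC
    exact ((hs.treesF G hG).nonempty_mem hC).ne_empty
  · intro G hG C hC D hD
    obtain ⟨B, rfl⟩ := hsing G hG
    rw [Finset.mem_singleton.1 hC, Finset.mem_singleton.1 hD]
    exact Or.inl (Finset.Subset.refl B)
  · intro G hG C hC hnb
    obtain ⟨B, rfl⟩ := hsing G hG
    rw [Finset.mem_singleton.1 hC] at hnb
    exact absurd isBlock_singleton hnb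
  · intro G hG C hC hnb
    obtain ⟨B, rfl⟩ := hsing G hG
    rw [Finset.mem_singleton.1 hC] at hnb
    exact absurd isBlock_singleton hnb
  · intro A X1 X2 hM
    obtain ⟨G, hG, B, hBb, hsub, hres⟩ := hs.mfalse A X1 X2 hM
    exact ⟨G, hG, hsub.trans (subset_grd hBb.1), hres⟩

lemma einv_step {M : MapT β} {F F' : List (Clus β)}
    (hmwf : ∀ A X1 X2 b, M A = some (X1, X2, b) →
      X1 ∪ X2 = A ∧ X1 ∩ X2 = ∅ ∧ X1.Nonempty ∧ X2.Nonempty)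
    (hinv : EInv U1 U2 M F) (hE : ExpandStep M F F') : EInv U1 U2 M F' := by
  classical
  obtain ⟨G, A, X1, X2, b, hA, hMA, hrep⟩ := hE
  have hGF : G ∈ F := by
    obtain ⟨l1, l2, rfl, -⟩ := hrep
    exact List.mem_append_right l1 (List.mem_cons_self)
  obtain ⟨hu, hd, hn1, hn2⟩ := hmwf A X1 X2 b hMA
  set N := (if b then insert X1 (insert X2 (G.erase A)) else insert X1 (insert X2 G))
    with hN
  have hX1A : X1 ⊆ A := hu ▸ Finset.subset_union_left
  have hX2A : X2 ⊆ A := hu ▸ Finset.subset_union_right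
  have hX1ne : X1 ≠ A := by
    rintro rfl
    obtain ⟨x, hx⟩ := hn2
    exact absurd (Finset.mem_inter.2 ⟨hX2A hx, hx⟩)
      (by rw [hd]; exact Finset.notMem_empty x)
  have hX2ne : X2 ≠ A := by
    rintro rfl
    obtain ⟨x, hx⟩ := hn1
    exact absurd (Finset.mem_inter.2 ⟨hx, hX1A hx⟩)
      (by rw [hd]; exact Finset.notMem_empty x)
  have hmemN : ∀ E, E ∈ N ↔ E = X1 ∨ E = X2 ∨ (E ∈ G ∧ (b = true → E ≠ A)) := by
    intro E
    cases b <;>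
      simp only [hN, if_true, if_false, Finset.mem_insert, Finset.mem_erase,
        Bool.false_eq_true, Bool.true_eq_false, IsEmpty.forall_iff, and_true,
        forall_true_left] <;>
      tauto
  have hX1mem : X1 ∈ N := (hmemN X1).2 (Or.inl rfl)
  have hX2mem : X2 ∈ N := (hmemN X2).2 (Or.inr (Or.inl rfl))
  have hlam := hinv.lam G hGF
  have hblX1 : IsBlock N X1 := by
    refine ⟨hX1mem, ?_⟩
    intro E hE hEX
    rcases (hmemN E).1 hE with rfl | rfl | ⟨hEG, -⟩
    · rfl
    · exfalso
      obtain ⟨x, hx⟩ := hn2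
      exact absurd (Finset.mem_inter.2 ⟨hEX hx, hx⟩)
        (by rw [hd]; exact Finset.notMem_empty x)
    · exfalso
      have hEA : E = A := hA.2 E hEG (hEX.trans hX1A)
      rw [hEA] at hEX
      exact hX1ne (Finset.Subset.antisymm hX1A hEX)
  have hblX2 : IsBlock N X2 := by
    refine ⟨hX2mem, ?_⟩
    intro E hE hEX
    rcases (hmemN E).1 hE with rfl | rfl | ⟨hEG, -⟩
    · exfalso
      obtain ⟨x, hx⟩ := hn1
      exact absurd (Finset.mem_inter.2 ⟨hx, hEX hx⟩)
        (by rw [hd]; exact Finset.notMem_empty x)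
    · rfl
    · exfalso
      have hEA : E = A := hA.2 E hEG (hEX.trans hX2A)
      rw [hEA] at hEX
      exact hX2ne (Finset.Subset.antisymm hX2A hEX)
  have hAB : ∀ B, IsBlock G B → B ≠ A → A ∩ B = ∅ := by
    intro B hB hBA
    rcases hlam A hA.1 B hB.1 with h | h | h
    · exact absurd (hB.2 A hA.1 h).symm hBA
    · exact absurd (hA.2 B hB.1 h) hBA
    · exact h
  have hoblocks : ∀ B, IsBlock G B → B ≠ A → IsBlock N B := by
    intro B hB hBA
    refine ⟨(hmemN B).2 (Or.inr (Or.inr ⟨hB.1, fun _ => hBA⟩)), ?_⟩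
    intro E hE hEB
    rcases (hmemN E).1 hE with rfl | rfl | ⟨hEG, -⟩
    · exfalso
      obtain ⟨x, hx⟩ := hn1
      exact absurd (Finset.mem_inter.2 ⟨hX1A hx, hEB hx⟩)
        (by rw [hAB B hB hBA]; exact Finset.notMem_empty x)
    · exfalso
      obtain ⟨x, hx⟩ := hn2
      exact absurd (Finset.mem_inter.2 ⟨hX2A hx, hEB hx⟩)
        (by rw [hAB B hB hBA]; exact Finset.notMem_empty x)
    · exact hB.2 E hEG hEB
  have hnbN : ∀ C ∈ N, ¬ IsBlock N C → (C ∈ G ∧ ¬ IsBlock G C) ∨ (C = A ∧ b = false) := by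
    intro C hC hnb
    rcases (hmemN C).1 hC with rfl | rfl | ⟨hCG, hbA⟩
    · exact absurd hblX1 hnb
    · exact absurd hblX2 hnb
    · by_cases hCA : C = A
      · right
        refine ⟨hCA, ?_⟩
        cases b
        · rfl
        · exact absurd hCA (hbA rfl)
      · exact Or.inl ⟨hCG, fun hb => hnb (hoblocks C hb hCA)⟩
  have hgrdN : grd N = grd G := by
    apply Finset.Subset.antisymm
    · intro x hx
      obtain ⟨E, hE, hxE⟩ := mem_grd_iff.1 hx
      rcases (hmemN E).1 hE with rfl | rfl | ⟨hEG, -⟩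
      · exact subset_grd hA.1 (hX1A hxE)
      · exact subset_grd hA.1 (hX2A hxE)
      · exact subset_grd hEG hxE
    · intro x hx
      obtain ⟨E, hE, hxE⟩ := mem_grd_iff.1 hx
      by_cases hEA : E = A
      · subst hEA
        rw [← hu] at hxE
        rcases Finset.mem_union.1 hxE with h | h
        · exact mem_grd_iff.2 ⟨X1, hX1mem, h⟩
        · exact mem_grd_iff.2 ⟨X2, hX2mem, h⟩
      · exact mem_grd_iff.2 ⟨E, (hmemN E).2 (Or.inr (Or.inr ⟨hE, fun _ => hEA⟩)), hxE⟩
  have hXE : ∀ {Xi : Finset β}, Xi ⊆ A → ∀ E ∈ G, Xi ⊆ E ∨ Xi ∩ E = ∅ := by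
    intro Xi hXi E hEG
    rcases hlam A hA.1 E hEG with h | h | h
    · exact Or.inl (hXi.trans h)
    · have hEA : E = A := hA.2 E hEG h
      exact Or.inl (hEA ▸ hXi)
    · right
      apply Finset.eq_empty_iff_forall_notMem.2
      intro x hx
      obtain ⟨h1, h2⟩ := Finset.mem_inter.1 hx
      exact absurd (Finset.mem_inter.2 ⟨hXi h1, h2⟩) (by rw [h]; exact Finset.notMem_empty x)
  refine ⟨?_, ?_, ?_, ?_, ?_, ?_⟩
  · refine replace_forall hrep hinv.nonempty ?_
    intro H hH
    rw [List.mem_singleton.1 hH]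
    intro C hC
    rcases (hmemN C).1 hC with rfl | rfl | ⟨hCG, -⟩
    · exact hn1.ne_empty
    · exact hn2.ne_empty
    · exact hinv.nonempty G hGF C hCG
  · refine replace_forall hrep hinv.lam ?_
    intro H hH
    rw [List.mem_singleton.1 hH]
    intro C hC D hD
    rcases (hmemN C).1 hC with rfl | rfl | ⟨hCG, -⟩ <;>
      rcases (hmemN D).1 hD with rfl | rfl | ⟨hDG, -⟩
    · exact Or.inl (Finset.Subset.refl _)
    · exact Or.inr (Or.inr hd)
    · rcases hXE hX1A D hDG with h | h
      · exact Or.inl h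
      · exact Or.inr (Or.inr h)
    · exact Or.inr (Or.inr (by rw [Finset.inter_comm]; exact hd))
    · exact Or.inl (Finset.Subset.refl _)
    · rcases hXE hX2A D hDG with h | h
      · exact Or.inl h
      · exact Or.inr (Or.inr h)
    · rcases hXE hX1A C hCG with h | h
      · exact Or.inr (Or.inl h)
      · exact Or.inr (Or.inr (by rw [Finset.inter_comm]; exact h))
    · rcases hXE hX2A C hCG with h | h
      · exact Or.inr (Or.inl h)
      · exact Or.inr (Or.inr (by rw [Finset.inter_comm]; exact h))
    · exact hinv.lam G hGF C hCG D hDG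
  · refine replace_forall hrep hinv.nb ?_
    intro H hH
    rw [List.mem_singleton.1 hH]
    intro C hC hnb
    rcases hnbN C hC hnb with ⟨hCG, hnbG⟩ | ⟨hCA, hbf⟩
    · exact hinv.nb G hGF C hCG hnbG
    · subst hCA
      rw [hbf] at hMA
      exact ⟨X1, X2, hMA⟩
  · refine replace_forall hrep hinv.cover ?_
    intro H hH
    rw [List.mem_singleton.1 hH]
    intro C hC hnb
    rcases hnbN C hC hnb with ⟨hCG, hnbG⟩ | ⟨hCA, -⟩
    · have hcov := hinv.cover G hGF C hCG hnbG
      intro x hx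
      obtain ⟨E, hEmem, hxE⟩ := mem_grd_iff.1 (hcov hx)
      obtain ⟨hEC, hEG⟩ := Finset.mem_erase.1 hEmem
      by_cases hEA : E = A
      · subst hEA
        rw [← hu] at hxE
        rcases Finset.mem_union.1 hxE with h | h
        · refine mem_grd_iff.2 ⟨X1, Finset.mem_erase.2 ⟨?_, hX1mem⟩, h⟩
          rintro rfl
          exact hnb hblX1
        · refine mem_grd_iff.2 ⟨X2, Finset.mem_erase.2 ⟨?_, hX2mem⟩, h⟩
          rintro rfl
          exact hnb hblX2
      · exact mem_grd_iff.2 ⟨E, Finset.mem_erase.2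
          ⟨hEC, (hmemN E).2 (Or.inr (Or.inr ⟨hEG, fun _ => hEA⟩))⟩, hxE⟩
    · subst hCA
      intro x hx
      rw [← hu] at hx
      rcases Finset.mem_union.1 hx with h | h
      · exact mem_grd_iff.2 ⟨X1, Finset.mem_erase.2 ⟨hX1ne, hX1mem⟩, h⟩
      · exact mem_grd_iff.2 ⟨X2, Finset.mem_erase.2 ⟨hX2ne, hX2mem⟩, h⟩
  · refine replace_pairwise_disjoint hrep hinv.disj (List.pairwise_singleton _ _) ?_
    intro H hH
    rw [List.mem_singleton.1 hH, hgrdN]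
  · intro A' X1' X2' h'
    obtain ⟨G0, hG0, hsub, hres⟩ := hinv.mf A' X1' X2' h'
    rcases replace_witness hrep hG0 with rfl | hmem
    · refine ⟨N, replace_mem_new hrep (List.mem_singleton_self _), ?_, ?_⟩
      · rw [hgrdN]
        exact hsub
      · rw [hgrdN]
        exact hres
    · exact ⟨G0, hmem, hsub, hres⟩

end Expand

section Main
variable {β : Type} [DecidableEq β]

lemma inv_run {X : Finset β} {ρ : β} (hρ : ρ ∉ X) {T1 T2 : Clus β}
    (h1 : IsPhylo X T1) (h2 : IsPhylo X T2) {k : ℕ} {s : St β}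
    (h : Relation.ReflTransGen (AMFStep k) (initSt T1 T2 ρ) s) :
    Inv (aug T1 ρ) (aug T2 ρ) s := by
  have hU2 : grd (aug T2 ρ) ∈ aug T2 ρ := (aug_tree hρ h2).grd_mem
  induction h with
  | refl => exact inv_init hρ h1 h2
  | tail hrt hstep ih =>
    obtain ⟨-, hns, hcase⟩ := hstep
    rcases hcase with ⟨A, hiso⟩ | ⟨-, A, C, hcon⟩ | ⟨hg, -, A, C, hcc⟩
    · exact inv_isol hU2 ih hns hiso
    · exact inv_con ih hcon
    · rcases hcc with hcut | hpend
      · exact inv_cut ih hg hcut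
      · exact inv_pend ih hpend

lemma einv_run {U1 U2 : Clus β} {M : MapT β} {F F' : List (Clus β)}
    (hmwf : ∀ A X1 X2 b, M A = some (X1, X2, b) →
      X1 ∪ X2 = A ∧ X1 ∩ X2 = ∅ ∧ X1.Nonempty ∧ X2.Nonempty)
    (hinv : EInv U1 U2 M F)
    (h : Relation.ReflTransGen (ExpandStep M) F F') : EInv U1 U2 M F' := by
  induction h with
  | refl => exact hinv
  | tail hrt hstep ih => exact einv_step hmwf ih hstep

end Main

/-- Every agreement forest reported by allMulMAFs is
relevant: contracting any edge destroys the agreement-forest property. -/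
theorem allMulMAFs_output_is_relevant
    {β : Type} [DecidableEq β] (X : Finset β) (ρ : β) (hρ : ρ ∉ X)
    (T1 T2 : Clus β) (h1 : IsPhylo X T1) (h2 : IsPhylo X T2) (k : ℕ) (F : List (Clus β))
    (h : AMFRun T1 T2 ρ k F) :
    ∀ F', ContractEdgeF F F' → ¬ IsAF X ρ T1 T2 F' := by
  intro F' hcon hAF
  obtain ⟨s, hrun, hsl, -, hexp⟩ := h
  have hinv := inv_run hρ h1 h2 hrun
  have hE0 := einv_of_terminal hinv hsl
  have hEF := einv_run hinv.mwf hE0 hexp.1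
  obtain ⟨l1, G, l2, C, rfl, hCG, hCgrd, hCnb, rfl⟩ := hcon
  have hGF : G ∈ l1 ++ G :: l2 := List.mem_append_right l1 (List.mem_cons_self)
  obtain ⟨X1, X2, hMC⟩ := hEF.nb G hGF C hCG hCnb
  obtain ⟨G1, hG1, hsub1, hres⟩ := hEF.mf C X1 X2 hMC
  have hCne : C ≠ ∅ := hEF.nonempty G hGF C hCG
  have hG1G : G1 = G := by
    by_contra hne
    have hdisj := (haveI : Std.Symm (fun G H : Clus β => Disjoint (grd G) (grd H)) := ⟨fun _ _ h => h.symm⟩; List.Pairwise.forall hEF.disj hG1 hGF hne)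
    obtain ⟨x, hx⟩ := Finset.nonempty_iff_ne_empty.2 hCne
    exact Finset.disjoint_left.1 hdisj (hsub1 hx) (subset_grd hCG hx)
  rw [hG1G] at hres
  have hGc : G.erase C ∈ l1 ++ G.erase C :: l2 :=
    List.mem_append_right l1 (List.mem_cons_self)
  have href := hAF.2.2.2.1 (G.erase C) hGc
  have hgsub : grd (G.erase C) ⊆ grd G := Finset.le_iff_subset.1 (Finset.sup_mono (Finset.erase_subset _ _))
  have hCsub : C ⊆ grd (G.erase C) := hEF.cover G hGF C hCG hCnb
  have hCmem : C ∈ G.erase C := by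
    rcases hres with hres | hres
    · exact href.1.1 (restr_mono_ground hres hCsub hgsub)
    · exact href.2.1 (restr_mono_ground hres hCsub hgsub)
  exact absurd hCmem (Finset.notMem_erase C G)

end Phylo
end

section
/- For any two rooted (nonbinary) phylogenetic 𝒳-trees T1 and T2 and any k ∈ ℕ, every computational path of allMulMAFs(T1, {T2}, ∅, k) terminates: in each recursive call either the number of nodes of R strictly decreases (removal of a leaf referring to an isolated node, or contraction of a common cherry) or the number of components of ℱ strictly increases (cutting of at least one edge), and a path stops as soon as R consists of a single leaf or ℱ has more than k components. -/
open scoped Classical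

namespace Phylo

/-! ## Rooted multifurcating phylogenetic trees, encoded as laminar families of clusters.

A rooted (possibly multi-labeled) tree is identified with the family of clusters
(= sets of taxa below a node) of its nodes.  Leaves are the minimal clusters
("blocks"); in an ordinary phylogenetic tree all blocks are singletons, while the
trees manipulated by the algorithm may carry set labels (contracted cherries). -/

variable {β : Type} [DecidableEq β]

section TermAux

variable {β : Type} [DecidableEq β]

lemma replaceIn_length {F F' : List (Clus β)} {G : Clus β} {new : List (Clus β)}
    (h : ReplaceIn F F' G new) : F'.length + 1 = F.length + new.length := by
  obtain ⟨l1, l2, h1, h2⟩ := h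
  subst h1; subst h2
  simp [List.length_append]
  omega

lemma pathNode_symm {G : Clus β} {A C D : Finset β} (h : PathNode G C A D) :
    PathNode G A C D := by
  obtain ⟨h1, h2, h3, h4⟩ := h
  refine ⟨h1, h3, h2, ?_⟩
  rcases h4 with h | h | h
  · exact Or.inr (Or.inl h)
  · exact Or.inl h
  · exact Or.inr (Or.inr (by rwa [Finset.union_comm] at h))

lemma pendGround_symm {G : Clus β} {A C D P : Finset β} (h : PendGround G C A D P) :
    PendGround G A C D P := by
  obtain ⟨hp, hbr⟩ := h
  refine ⟨pathNode_symm hp, ?_⟩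
  rcases hbr with h | h | ⟨hl, E1, E2, hm1, hm2, hPeq⟩
  · exact Or.inr (Or.inl h)
  · exact Or.inl h
  · exact Or.inr (Or.inr ⟨by rwa [Finset.union_comm] at hl, E2, E1, hm2, hm1,
      by rw [hPeq, Finset.union_comm]⟩)

lemma pend_side {G : Clus β} {A C : Finset β} (hAG : A ∈ G) :
    ∀ n (D : Finset β), D.card ≤ n → D ∈ G → A ⊂ D → ¬ C ⊆ D →
      ∃ D' P, PendGround G A C D' P ∧ P.Nonempty := by
  intro n
  induction n with
  | zero =>
    intro D hcard hD hAD hCD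
    have := Finset.card_lt_card hAD
    omega
  | succ n ih =>
    intro D hcard hD hAD hCD
    by_cases hmax : ∀ E' ∈ G, A ⊆ E' → E' ⊂ D → E' ⊆ A
    · refine ⟨D, D \ A, ⟨⟨hD, hAD.ne', ?_, Or.inl ⟨hAD.subset, hCD⟩⟩,
        Or.inl ⟨hAD.subset, hCD, A, ⟨hAG, Finset.Subset.refl A, hAD, hmax⟩, rfl⟩⟩, ?_⟩
      · intro h; subst h; exact hCD (Finset.Subset.refl _)
      · exact Finset.sdiff_nonempty.mpr fun h => hAD.ne (Finset.Subset.antisymm hAD.subset h)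
    · push_neg at hmax
      obtain ⟨E', hE'G, hAE', hE'D, hnsub⟩ := hmax
      have hAE : A ⊂ E' := hAE'.ssubset_of_ne fun h => hnsub (h ▸ Finset.Subset.refl A)
      have hcd : E'.card ≤ n := by have := Finset.card_lt_card hE'D; omega
      exact ih E' hcd hE'G hAE fun hc => hCD (hc.trans hE'D.subset)

lemma pend_exists {G : Clus β} {A C L : Finset β}
    (hA : IsBlock G A) (hC : IsBlock G C) (hne : A ≠ C)
    (hnch : ¬ CherryOf G A C) (hL : IsLca G (A ∪ C) L) :
    ∃ D P, PendGround G A C D P ∧ P.Nonempty := by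
  by_cases hside1 : ∃ D ∈ G, A ⊂ D ∧ ¬ C ⊆ D
  · obtain ⟨D, hD, ha, hb⟩ := hside1
    exact pend_side hA.1 D.card D le_rfl hD ha hb
  by_cases hside2 : ∃ D ∈ G, C ⊂ D ∧ ¬ A ⊆ D
  · obtain ⟨D, hD, ha, hb⟩ := hside2
    obtain ⟨D', P, hp, hpn⟩ := pend_side (C := A) hC.1 D.card D le_rfl hD ha hb
    exact ⟨D', P, pendGround_symm hp, hpn⟩
  push_neg at hside1 hside2
  have hLG : L ∈ G := hL.1
  have hsub : A ∪ C ⊆ L := hL.2.1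
  have hAsubL : A ⊆ L := (Finset.union_subset_iff.mp hsub).1
  have hCsubL : C ⊆ L := (Finset.union_subset_iff.mp hsub).2
  have hAL : A ⊂ L := by
    refine hAsubL.ssubset_of_ne ?_
    intro h
    exact hne ((hA.2 C hC.1 (h ▸ hCsubL)).symm)
  have hCL : C ⊂ L := by
    refine hCsubL.ssubset_of_ne ?_
    intro h
    exact hne (hC.2 A hA.1 (h ▸ hAsubL))
  have hmaxA : ∀ E ∈ G, A ⊆ E → E ⊂ L → E = A := by
    intro E hE hAE hEL
    by_cases hCE : C ⊆ E
    · exact absurd (Finset.Subset.antisymm hEL.subset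
        (hL.2.2 E hE (Finset.union_subset hAE hCE))) hEL.ne
    · by_contra hEA
      exact hCE (hside1 E hE (hAE.ssubset_of_ne fun h => hEA h.symm))
  have hmaxC : ∀ E ∈ G, C ⊆ E → E ⊂ L → E = C := by
    intro E hE hCE hEL
    by_cases hAE : A ⊆ E
    · exact absurd (Finset.Subset.antisymm hEL.subset
        (hL.2.2 E hE (Finset.union_subset hAE hCE))) hEL.ne
    · by_contra hEC
      exact hAE (hside2 E hE (hCE.ssubset_of_ne fun h => hEC h.symm))
  by_cases hP : (L \ (A ∪ C)).Nonempty
  · refine ⟨L, L \ (A ∪ C), ⟨⟨hLG, hAL.ne', hCL.ne', Or.inr (Or.inr hL)⟩,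
      Or.inr (Or.inr ⟨hL, A, C,
        ⟨hA.1, Finset.Subset.refl A, hAL, fun E' h1 h2 h3 => by rw [hmaxA E' h1 h2 h3]⟩,
        ⟨hC.1, Finset.Subset.refl C, hCL, fun E' h1 h2 h3 => by rw [hmaxC E' h1 h2 h3]⟩,
        rfl⟩)⟩, hP⟩
  · exfalso
    have hLeq : L = A ∪ C := by
      have h0 : L \ (A ∪ C) = ∅ := Finset.not_nonempty_iff_eq_empty.mp hP
      exact Finset.Subset.antisymm (Finset.sdiff_eq_empty_iff_subset.mp h0) hsub
    exact hnch ⟨hne, hA, hC, L, ⟨hA.1, hLG, hAL, hmaxA⟩, ⟨hC.1, hLG, hCL, hmaxC⟩⟩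

/-- The key per-step lemma: each recursive call strictly shrinks `R` (keeping
the number of components) or strictly increases the number of components
(keeping `R`). -/
lemma amfStep_main {k : ℕ} {s t : St β} (h : AMFStep k s t) :
    (t.1.card < s.1.card ∧ t.2.1.length = s.2.1.length) ∨
    (t.1 = s.1 ∧ s.2.1.length < t.2.1.length) := by
  obtain ⟨hk, hns, hcase⟩ := h
  rcases hcase with ⟨A, hiso, ht⟩ | ⟨-, A, C, hcon⟩ | ⟨-, -, A, C, hcp⟩
  · -- Case 1c: removal of a leaf referring to an isolated node
    subst ht
    left
    refine ⟨?_, rfl⟩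
    have hAR : A ∈ s.1 := hiso.1.1
    have hmem : (∅ : Finset β) ∈ s.1.image (· ∩ (grd s.1 \ A)) :=
      Finset.mem_image.mpr ⟨A, hAR, by simp⟩
    have h1 : (rmBlock s.1 A).card = (s.1.image (· ∩ (grd s.1 \ A))).card - 1 :=
      Finset.card_erase_of_mem hmem
    have h2 : (s.1.image (· ∩ (grd s.1 \ A))).card ≤ s.1.card := Finset.card_image_le
    have h3 : 0 < (s.1.image (· ∩ (grd s.1 \ A))).card := Finset.card_pos.mpr ⟨∅, hmem⟩
    simp only [h1]
    omega
  · -- Case 2: contraction of a common cherry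
    obtain ⟨hcommon, G, F', hG, hch, hrep, PR, PG, hPR, hPG, b, hb, ht⟩ := hcon
    subst ht
    left
    constructor
    · obtain ⟨hne, P, hChA, hChC, -⟩ := hcommon.1
      have hAmem : A ∈ s.1 := hChA.1
      have hCmem : C ∈ s.1 := hChC.1
      have hCe : C ∈ s.1.erase A := Finset.mem_erase.mpr ⟨hne.symm, hCmem⟩
      have h1 : ((s.1.erase A).erase C).card = (s.1.erase A).card - 1 :=
        Finset.card_erase_of_mem hCe
      have h2 : (s.1.erase A).card = s.1.card - 1 := Finset.card_erase_of_mem hAmem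
      have h3 : (conCh s.1 A C).card ≤ ((s.1.erase A).erase C).card + 1 :=
        Finset.card_insert_le _ _
      have h4 : 1 < s.1.card := Finset.one_lt_card_iff.mpr ⟨A, C, hAmem, hCmem, hne⟩
      simp only []
      omega
    · have := replaceIn_length hrep
      simp at this
      show F'.length = s.2.1.length
      omega
  · rcases hcp with hcut | hpend
    · -- Case 3a: cutting a single edge
      obtain ⟨hcontra, G, F', M', hG, hblk, hrep, hupd, ht⟩ := hcut
      subst ht
      right
      refine ⟨rfl, ?_⟩
      have := replaceIn_length hrep
      simp at this
      show s.2.1.length < F'.length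
      omega
    · -- Case 3b: cutting the pendant edges of the a–c path
      obtain ⟨hcontra, G, new, F', M', hG, hbA, hbC, hcutpend, hrep, hupd, ht⟩ := hpend
      subst ht
      right
      refine ⟨rfl, ?_⟩
      obtain ⟨L, hL, pend, hp1, hp2, hnd, hout⟩ := hcutpend
      have hne : A ≠ C := hcontra.1.1
      have hnch : ¬ CherryOf G A C := fun hc => hcontra.2 ⟨G, hG, hc⟩
      obtain ⟨D, P, hpg, hpn⟩ := pend_exists hbA hbC hne hnch hL
      have hmem : pendComp G P ∈ pend := hp2 D P hpg hpn
      have hlen : 1 ≤ pend.length := List.length_pos_iff.mpr (by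
        intro h; rw [h] at hmem; exact List.not_mem_nil hmem)
      have := replaceIn_length hrep
      rw [hout] at this
      simp at this
      show s.2.1.length < F'.length
      omega

end TermAux

/-- Every computational path of allMulMAFs terminates: each
recursive call strictly decreases `R` or strictly increases the number of
components of `F`; a path only continues while `R` is not a single leaf and
`F` has at most `k` components; and there is no infinite computation path. -/
theorem allMulMAFs_terminates
    {β : Type} [DecidableEq β] (X : Finset β) (ρ : β) (hρ : ρ ∉ X)
    (T1 T2 : Clus β) (h1 : IsPhylo X T1) (h2 : IsPhylo X T2) (k : ℕ) :
    (∀ s t : St β, AMFStep k s t → t.1.card < s.1.card ∨ s.2.1.length < t.2.1.length) ∧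
    (∀ s t : St β, AMFStep k s t → ¬ SingleLeaf s.1 ∧ s.2.1.length ≤ k) ∧
    ¬ ∃ f : ℕ → St β, f 0 = initSt T1 T2 ρ ∧ ∀ n, AMFStep k (f n) (f (n + 1)) := by
  refine ⟨?_, fun s t h => ⟨h.2.1, h.1⟩, ?_⟩
  · intro s t h
    rcases amfStep_main h with ⟨h1, -⟩ | ⟨-, h2⟩
    · exact Or.inl h1
    · exact Or.inr h2
  · rintro ⟨f, hf0, hstep⟩
    set μ : ℕ → ℕ := fun n => (f n).1.card * (k + 1) + (k - (f n).2.1.length) with hμ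
    have hdec : ∀ n, μ (n + 1) < μ n := by
      intro n
      have h1 := hstep n
      have h2 := hstep (n + 1)
      have hk1 : (f n).2.1.length ≤ k := h1.1
      have hk2 : (f (n + 1)).2.1.length ≤ k := h2.1
      rcases amfStep_main h1 with ⟨hc, hl⟩ | ⟨hc, hl⟩
      · have key : ((f (n + 1)).1.card + 1) * (k + 1) ≤ (f n).1.card * (k + 1) :=
          Nat.mul_le_mul_right _ (Nat.succ_le_of_lt hc)
        rw [Nat.succ_mul] at key
        have h3 : k - (f (n + 1)).2.1.length = k - (f n).2.1.length := by rw [hl]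
        show (f (n + 1)).1.card * (k + 1) + (k - (f (n + 1)).2.1.length) <
          (f n).1.card * (k + 1) + (k - (f n).2.1.length)
        rw [h3]
        have : (f (n + 1)).1.card * (k + 1) < (f n).1.card * (k + 1) :=
          lt_of_lt_of_le (Nat.lt_add_of_pos_right (Nat.succ_pos k)) key
        omega
      · have h3 : (f (n + 1)).1.card = (f n).1.card := by rw [hc]
        show (f (n + 1)).1.card * (k + 1) + (k - (f (n + 1)).2.1.length) <
          (f n).1.card * (k + 1) + (k - (f n).2.1.length)
        rw [h3]
        have : k - (f (n + 1)).2.1.length < k - (f n).2.1.length := by omega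
        omega
    have hbound : ∀ n, μ n + n ≤ μ 0 := by
      intro n
      induction n with
      | zero => simp
      | succ n ih => have := hdec n; omega
    have := hbound (μ 0 + 1)
    omega

end Phylo
end
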